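/- arXiv:2412.16263 — 3 statements merged into one kernel-verified Lean document; each statement's English description precedes it below -/
import Mathlib

section
/- Let $f:\mathbb{R}_+\to\mathbb{R}_+$ be a concave increasing function with $f(0)=0$, and let $\Theta,\Theta'\in\mathbb{R}^{d_1\times d_2}$ with $d=\min\{d_1,d_2\}$. Then $\sum_{j=1}^d f(\sigma_j(\Theta+\Theta'))\le \sum_{j=1}^d f(\sigma_j(\Theta))+\sum_{j=1}^d f(\sigma_j(\Theta'))$, where $\sigma_j(\cdot)$ denotes the $j$-th largest singular value. -/
/-- The `j`-th singular value of a real matrix `A`, as the square root of the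
`j`-th eigenvalue of `Aᴴ * A` (square roots of the eigenvalues of `AᴴA` enumerate
the singular values of `A`, padded with zeros). -/
noncomputable def singularValue {d1 d2 : ℕ} (A : Matrix (Fin d1) (Fin d2) ℝ)
    (j : Fin d2) : ℝ :=
  Real.sqrt ((Matrix.isHermitian_conjTranspose_mul_self A).eigenvalues j)

/-- Sum of `f` applied to the singular values of `A`. Since `f 0 = 0` is assumed,
this agrees with `∑_{j=1}^{min d1 d2} f (σ_j A)`. -/
noncomputable def singValSum {d1 d2 : ℕ} (f : ℝ → ℝ)
    (A : Matrix (Fin d1) (Fin d2) ℝ) : ℝ :=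
  ∑ j, f (singularValue A j)

open Matrix Finset

namespace Rotfeld

variable {n : ℕ} {ι : Type*} [Fintype ι]

lemma dot_self_nonneg (x : Fin n → ℝ) : 0 ≤ x ⬝ᵥ x :=
  Finset.sum_nonneg fun i _ => mul_self_nonneg _

lemma dot_self_eq_zero {x : Fin n → ℝ} (h : x ⬝ᵥ x = 0) : x = 0 := by
  funext i
  have := (Finset.sum_eq_zero_iff_of_nonneg (fun i _ => mul_self_nonneg (x i))).mp h i
    (Finset.mem_univ i)
  simpa [mul_self_eq_zero] using this


lemma dotProduct_sumr (x : Fin n → ℝ) (w : ι → (Fin n → ℝ)) :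
    x ⬝ᵥ (∑ i, w i) = ∑ i, x ⬝ᵥ w i := by
  simp only [dotProduct, Finset.sum_apply, Finset.mul_sum]
  exact Finset.sum_comm

lemma sumr_dotProduct (x : Fin n → ℝ) (w : ι → (Fin n → ℝ)) :
    (∑ i, w i) ⬝ᵥ x = ∑ i, w i ⬝ᵥ x := by
  rw [dotProduct_comm, dotProduct_sumr]
  simp [dotProduct_comm]

/-- residual norm estimate: key computation behind Bessel. -/
lemma residual_dot_le (p : ι → (Fin n → ℝ)) (horth : ∀ i j, i ≠ j → p i ⬝ᵥ p j = 0)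
    (hnorm : ∀ i, p i ⬝ᵥ p i ≤ 1) (x : Fin n → ℝ) :
    (x - ∑ i, (p i ⬝ᵥ x) • p i) ⬝ᵥ (x - ∑ i, (p i ⬝ᵥ x) • p i)
      ≤ x ⬝ᵥ x - ∑ i, (p i ⬝ᵥ x)^2 := by
  set c : ι → ℝ := fun i => p i ⬝ᵥ x with hc
  have hxy : x ⬝ᵥ (∑ i, c i • p i) = ∑ i, (c i)^2 := by
    rw [dotProduct_sumr]
    refine Finset.sum_congr rfl fun i _ => ?_
    rw [dotProduct_smul, dotProduct_comm]
    simp [hc, sq, smul_eq_mul]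
  have hyx : (∑ i, c i • p i) ⬝ᵥ x = ∑ i, (c i)^2 := by
    rw [dotProduct_comm]; exact hxy
  have hyy : (∑ i, c i • p i) ⬝ᵥ (∑ i, c i • p i) = ∑ i, (c i)^2 * (p i ⬝ᵥ p i) := by
    rw [sumr_dotProduct]
    refine Finset.sum_congr rfl fun i _ => ?_
    rw [smul_dotProduct, dotProduct_sumr]
    rw [Finset.sum_eq_single i]
    · rw [dotProduct_smul]; simp [sq, smul_eq_mul]; ring
    · intro j _ hj
      rw [dotProduct_smul, horth i j (Ne.symm hj)]
      simp
    · simp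
  have expand : (x - ∑ i, c i • p i) ⬝ᵥ (x - ∑ i, c i • p i)
      = x ⬝ᵥ x - 2 * ∑ i, (c i)^2 + ∑ i, (c i)^2 * (p i ⬝ᵥ p i) := by
    rw [sub_dotProduct, dotProduct_sub, dotProduct_sub, hxy, hyx, hyy]
    ring
  rw [expand]
  have : ∑ i, (c i)^2 * (p i ⬝ᵥ p i) ≤ ∑ i, (c i)^2 :=
    Finset.sum_le_sum fun i _ => by
      nlinarith [sq_nonneg (c i), hnorm i]
  linarith

/-- Bessel inequality for pairwise-orthogonal families of norm at most one. -/
lemma bessel (p : ι → (Fin n → ℝ)) (horth : ∀ i j, i ≠ j → p i ⬝ᵥ p j = 0)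
    (hnorm : ∀ i, p i ⬝ᵥ p i ≤ 1) (x : Fin n → ℝ) :
    ∑ i, (p i ⬝ᵥ x)^2 ≤ x ⬝ᵥ x := by
  have h1 := residual_dot_le p horth hnorm x
  have h2 := dot_self_nonneg (x - ∑ i, (p i ⬝ᵥ x) • p i)
  linarith

/-- Cauchy–Schwarz duality step. -/
lemma sum_dot_mul_dot_le {n1 n2 : ℕ} (p : ι → (Fin n1 → ℝ)) (q : ι → (Fin n2 → ℝ))
    (hp : ∀ x, ∑ i, (p i ⬝ᵥ x)^2 ≤ x ⬝ᵥ x) (hq : ∀ x, ∑ i, (q i ⬝ᵥ x)^2 ≤ x ⬝ᵥ x)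
    (a : Fin n1 → ℝ) (b : Fin n2 → ℝ) (ha : a ⬝ᵥ a ≤ 1) (hb : b ⬝ᵥ b ≤ 1) :
    ∑ i, (p i ⬝ᵥ a) * (q i ⬝ᵥ b) ≤ 1 := by
  have cs := Real.sum_mul_le_sqrt_mul_sqrt Finset.univ (fun i => p i ⬝ᵥ a) (fun i => q i ⬝ᵥ b)
  have h1 : Real.sqrt (∑ i, (p i ⬝ᵥ a)^2) ≤ 1 := by
    rw [show (1:ℝ) = Real.sqrt 1 by simp]
    exact Real.sqrt_le_sqrt (le_trans (hp a) ha)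
  have h2 : Real.sqrt (∑ i, (q i ⬝ᵥ b)^2) ≤ 1 := by
    rw [show (1:ℝ) = Real.sqrt 1 by simp]
    exact Real.sqrt_le_sqrt (le_trans (hq b) hb)
  calc ∑ i, (p i ⬝ᵥ a) * (q i ⬝ᵥ b) ≤ _ := cs
    _ ≤ 1 * 1 := by
        exact mul_le_mul h1 h2 (Real.sqrt_nonneg _) zero_le_one
    _ = 1 := one_mul 1

/-- existence of a "top set" of indices for a vector of values. -/
lemma exists_top_set (σ : Fin n → ℝ) (k : ℕ) :
    ∃ T : Finset (Fin n), T.card = min k n ∧ ∀ i ∈ T, ∀ j, j ∉ T → σ j ≤ σ i := by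
  induction k with
  | zero => exact ⟨∅, by simp, by simp⟩
  | succ k ih =>
    obtain ⟨T, hcard, htop⟩ := ih
    by_cases hkn : n ≤ k
    · refine ⟨T, ?_, htop⟩
      rw [hcard, min_eq_right hkn, min_eq_right (le_trans hkn (Nat.le_succ k))]
    · push_neg at hkn
      have hTuniv : T ≠ univ := by
        intro h
        rw [h, Finset.card_univ, Fintype.card_fin] at hcard
        omega
      have hne : (Tᶜ : Finset (Fin n)).Nonempty := by
        apply Finset.card_pos.mp
        rw [Finset.card_compl]
        have : T.card < Fintype.card (Fin n) := by
          rw [Fintype.card_fin, hcard]; omega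
        omega
      obtain ⟨j₀, hj₀mem, hj₀max⟩ := Finset.exists_max_image Tᶜ σ hne
      refine ⟨insert j₀ T, ?_, ?_⟩
      · rw [Finset.card_insert_of_notMem (Finset.mem_compl.mp hj₀mem), hcard]
        omega
      · intro i hi j hj
        have hjc : j ∈ Tᶜ := Finset.mem_compl.mpr fun h => hj (Finset.mem_insert_of_mem h)
        rcases Finset.mem_insert.mp hi with rfl | hiT
        · exact hj₀max j hjc
        · exact htop i hiT j (fun h => hj (Finset.mem_insert_of_mem h))

/-- weights in `[0,1]` with total mass at most `k` pick up at most the top-`k` sum. -/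
lemma sum_weights_le_top (σ w : Fin n → ℝ) (hσ : ∀ j, 0 ≤ σ j) (hw0 : ∀ j, 0 ≤ w j)
    (hw1 : ∀ j, w j ≤ 1) (k : ℕ) (hsum : ∑ j, w j ≤ (k : ℝ))
    (T : Finset (Fin n)) (hcard : T.card = min k n) (htop : ∀ i ∈ T, ∀ j, j ∉ T → σ j ≤ σ i) :
    ∑ j, σ j * w j ≤ ∑ j ∈ T, σ j := by
  by_cases hTuniv : T = univ
  · subst hTuniv
    refine Finset.sum_le_sum fun j _ => ?_
    calc σ j * w j ≤ σ j * 1 := mul_le_mul_of_nonneg_left (hw1 j) (hσ j)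
      _ = σ j := mul_one _
  · obtain ⟨j₀, hj₀⟩ : ∃ j, j ∉ T := by
      by_contra h
      push_neg at h
      exact hTuniv (Finset.eq_univ_of_forall h)
    rcases Finset.eq_empty_or_nonempty T with rfl | hTne
    · -- card T = 0 = min k n, and n > 0, so k = 0
      have hn : 0 < n := Fin.pos j₀
      have hk : k = 0 := by
        have := hcard.symm
        simp only [Finset.card_empty] at this
        omega
      subst hk
      have hwz : ∀ j, w j = 0 := by
        intro j
        have h1 : ∑ j, w j ≤ 0 := by simpa using hsum
        have h2 : 0 ≤ ∑ j, w j := Finset.sum_nonneg fun j _ => hw0 j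
        have : ∑ j, w j = 0 := le_antisymm h1 h2
        exact (Finset.sum_eq_zero_iff_of_nonneg (fun j _ => hw0 j)).mp this j (Finset.mem_univ j)
      simp [hwz]
    · have hcardk : T.card = k := by
        have hlt : T.card < n := by
          have := Finset.card_lt_card (Finset.ssubset_univ_iff.mpr hTuniv)
          simpa using this
        omega
      -- T nonempty, T ≠ univ, so card T = k
      set m := (T.image σ).min' (Finset.Nonempty.image hTne σ) with hm
      obtain ⟨i₁, hi₁T, hi₁⟩ := Finset.mem_image.mp ((T.image σ).min'_mem (Finset.Nonempty.image hTne σ))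
      have hmle : ∀ i ∈ T, m ≤ σ i := fun i hi =>
        Finset.min'_le _ _ (Finset.mem_image_of_mem σ hi)
      have hm0 : 0 ≤ m := by rw [hm, ← hi₁]; exact hσ i₁
      have houtside : ∀ j, j ∉ T → σ j ≤ m := fun j hj => by
        rw [hm, ← hi₁]; exact htop i₁ hi₁T j hj
      have split : ∑ j, σ j * w j = ∑ j ∈ T, σ j * w j + ∑ j ∈ Tᶜ, σ j * w j :=
        (Finset.sum_add_sum_compl T _).symm
      have hTc : ∑ j ∈ Tᶜ, σ j * w j ≤ m * ∑ j ∈ Tᶜ, w j := by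
        rw [Finset.mul_sum]
        exact Finset.sum_le_sum fun j hj =>
          mul_le_mul_of_nonneg_right (houtside j (Finset.mem_compl.mp hj)) (hw0 j)
      have hwTc : ∑ j ∈ Tᶜ, w j ≤ (k : ℝ) - ∑ j ∈ T, w j := by
        have := Finset.sum_add_sum_compl T w
        linarith
      have hcard2 : (T.card : ℝ) = (k : ℝ) := by exact_mod_cast hcardk
      have hstep : m * ∑ j ∈ Tᶜ, w j ≤ ∑ j ∈ T, m * (1 - w j) := by
        calc m * ∑ j ∈ Tᶜ, w j ≤ m * ((k : ℝ) - ∑ j ∈ T, w j) :=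
              mul_le_mul_of_nonneg_left hwTc hm0
          _ = ∑ j ∈ T, m * (1 - w j) := by
              have hone : (k : ℝ) = ∑ _j ∈ T, (1:ℝ) := by
                rw [Finset.sum_const, nsmul_eq_mul, mul_one, hcard2]
              calc m * ((k:ℝ) - ∑ j ∈ T, w j)
                  = m * ((∑ _j ∈ T, (1:ℝ)) - ∑ j ∈ T, w j) := by rw [← hone]
                _ = ∑ j ∈ T, m * (1 - w j) := by
                    rw [← Finset.sum_sub_distrib, Finset.mul_sum]
      have hfinal : ∑ j ∈ T, m * (1 - w j) ≤ ∑ j ∈ T, σ j * (1 - w j) :=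
        Finset.sum_le_sum fun j hj =>
          mul_le_mul_of_nonneg_right (hmle j hj) (by linarith [hw1 j])
      calc ∑ j, σ j * w j = ∑ j ∈ T, σ j * w j + ∑ j ∈ Tᶜ, σ j * w j := split
        _ ≤ ∑ j ∈ T, σ j * w j + ∑ j ∈ T, σ j * (1 - w j) := by
            have := le_trans hTc (le_trans hstep hfinal)
            linarith
        _ = ∑ j ∈ T, σ j := by
            rw [← Finset.sum_add_distrib]
            exact Finset.sum_congr rfl fun j _ => by ring

end Rotfeld

namespace Rotfeld
open Matrix Finset

section SVD
variable {d1 d2 : ℕ} (M : Matrix (Fin d1) (Fin d2) ℝ)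

noncomputable def svdV (j : Fin d2) : Fin d2 → ℝ :=
  ⇑((Matrix.isHermitian_conjTranspose_mul_self M).eigenvectorBasis j)

noncomputable def svdU (j : Fin d2) : Fin d1 → ℝ :=
  if singularValue M j = 0 then 0 else (singularValue M j)⁻¹ • (M *ᵥ svdV M j)

lemma sv_nonneg (j : Fin d2) : 0 ≤ singularValue M j := Real.sqrt_nonneg _

lemma sv_sq (j : Fin d2) :
    singularValue M j ^ 2 = (Matrix.isHermitian_conjTranspose_mul_self M).eigenvalues j :=
  Real.sq_sqrt (Matrix.eigenvalues_conjTranspose_mul_self_nonneg M j)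

lemma svdV_ortho (i j : Fin d2) : svdV M i ⬝ᵥ svdV M j = if i = j then 1 else 0 := by
  have := orthonormal_iff_ite.mp
    ((Matrix.isHermitian_conjTranspose_mul_self M).eigenvectorBasis.orthonormal) i j
  rw [PiLp.inner_apply] at this
  simpa [svdV, dotProduct, RCLike.inner_apply, mul_comm] using this

lemma conjT_eq : Mᴴ = Mᵀ := by
  ext i j; simp [Matrix.conjTranspose_apply]

lemma svd_key (j : Fin d2) (z : Fin d2 → ℝ) :
    (M *ᵥ svdV M j) ⬝ᵥ (M *ᵥ z) = (singularValue M j ^ 2) * (svdV M j ⬝ᵥ z) := by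
  rw [Matrix.dotProduct_mulVec (M *ᵥ svdV M j), Matrix.vecMul_mulVec]
  have h1 : svdV M j ᵥ* (Mᵀ * M) = (Mᵀ * M) *ᵥ svdV M j := by
    rw [← Matrix.mulVec_transpose]
    congr 1
    rw [Matrix.transpose_mul, Matrix.transpose_transpose]
  rw [h1]
  have h2 : (Mᵀ * M) *ᵥ svdV M j
      = (Matrix.isHermitian_conjTranspose_mul_self M).eigenvalues j • svdV M j := by
    rw [← conjT_eq]
    exact (Matrix.isHermitian_conjTranspose_mul_self M).mulVec_eigenvectorBasis j
  rw [h2, smul_dotProduct, sv_sq, smul_eq_mul]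

lemma svd_MV (j : Fin d2) : M *ᵥ svdV M j = singularValue M j • svdU M j := by
  by_cases h : singularValue M j = 0
  · have hz : (M *ᵥ svdV M j) ⬝ᵥ (M *ᵥ svdV M j) = 0 := by
      rw [svd_key, h]; ring
    rw [dot_self_eq_zero hz, h, zero_smul]
  · rw [svdU, if_neg h, smul_smul, mul_inv_cancel₀ h, one_smul]

lemma svdU_dot (i j : Fin d2) :
    svdU M i ⬝ᵥ svdU M j
      = if i = j ∧ singularValue M i ≠ 0 then 1 else 0 := by
  by_cases hi : singularValue M i = 0
  · rw [svdU, if_pos hi, zero_dotProduct, if_neg (by tauto)]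
  · by_cases hj : singularValue M j = 0
    · rw [svdU, svdU, if_pos hj, dotProduct_zero, if_neg]
      rintro ⟨rfl, -⟩; exact hi hj
    · rw [svdU, svdU, if_neg hi, if_neg hj, smul_dotProduct, dotProduct_smul,
        svd_key, svdV_ortho]
      by_cases hij : i = j
      · subst hij
        rw [if_pos rfl, if_pos ⟨rfl, hi⟩]
        field_simp
        ring_nf
        field_simp
      · rw [if_neg hij, if_neg (by tauto)]
        simp
lemma svdU_ortho (i j : Fin d2) (h : i ≠ j) : svdU M i ⬝ᵥ svdU M j = 0 := by
  rw [svdU_dot, if_neg (by tauto)]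

lemma svdU_norm (j : Fin d2) : svdU M j ⬝ᵥ svdU M j ≤ 1 := by
  rw [svdU_dot]
  split <;> norm_num

lemma svd_adj (j : Fin d2) (z : Fin d2 → ℝ) :
    svdU M j ⬝ᵥ (M *ᵥ z) = singularValue M j * (svdV M j ⬝ᵥ z) := by
  by_cases h : singularValue M j = 0
  · rw [svdU, if_pos h, zero_dotProduct, h, zero_mul]
  · rw [svdU, if_neg h, smul_dotProduct, svd_key, smul_eq_mul]
    field_simp

lemma svdV_complete (z : Fin d2 → ℝ) : z = ∑ j, (svdV M j ⬝ᵥ z) • svdV M j := by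
  classical
  set Q : Matrix (Fin d2) (Fin d2) ℝ := Matrix.of (fun j k => svdV M j k) with hQ
  have h1 : Q * Qᵀ = 1 := by
    ext i j
    have := svdV_ortho M i j
    simpa [Matrix.mul_apply, Matrix.one_apply, hQ, dotProduct] using this
  have h2 : Qᵀ * Q = 1 := mul_eq_one_comm.mp h1
  have h3 : Qᵀ *ᵥ (Q *ᵥ z) = z := by
    rw [Matrix.mulVec_mulVec, h2, Matrix.one_mulVec]
  calc z = Qᵀ *ᵥ (Q *ᵥ z) := h3.symm
    _ = ∑ j, (svdV M j ⬝ᵥ z) • svdV M j := by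
        funext k
        simp only [Matrix.mulVec, Matrix.transpose_apply, Finset.sum_apply, Pi.smul_apply,
          smul_eq_mul, dotProduct, hQ, Matrix.of_apply]
        refine Finset.sum_congr rfl fun j _ => ?_
        exact mul_comm _ _

lemma svd_expand (z : Fin d2 → ℝ) :
    M *ᵥ z = ∑ j, (singularValue M j * (svdV M j ⬝ᵥ z)) • svdU M j := by
  conv_lhs => rw [svdV_complete M z]
  have : M *ᵥ (∑ j, (svdV M j ⬝ᵥ z) • svdV M j)
      = ∑ j, (svdV M j ⬝ᵥ z) • (M *ᵥ svdV M j) := by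
    rw [← Matrix.mulVecLin_apply, map_sum]
    exact Finset.sum_congr rfl fun j _ => by rw [LinearMap.map_smul, Matrix.mulVecLin_apply]
  rw [this]
  exact Finset.sum_congr rfl fun j _ => by rw [svd_MV, smul_smul, mul_comm]

end SVD
end Rotfeld


namespace Rotfeld
open Matrix Finset
open scoped RealInnerProductSpace

section Bridge
variable {n : ℕ}

noncomputable def fromE : EuclideanSpace ℝ (Fin n) ≃ₗ[ℝ] (Fin n → ℝ) :=
  WithLp.linearEquiv 2 ℝ (Fin n → ℝ)

lemma dot_eq_inner (x y : EuclideanSpace ℝ (Fin n)) :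
    fromE x ⬝ᵥ fromE y = ⟪x, y⟫ := by
  rw [PiLp.inner_apply]
  simp [fromE, dotProduct, RCLike.inner_apply, WithLp.linearEquiv, mul_comm]

lemma fromE_symm_apply (v : Fin n → ℝ) : fromE (fromE.symm v) = v := by
  simp

end Bridge

section Ortho
variable {n : ℕ}

/-- From any finite family `G` of vectors, produce an orthonormal family `E` spanning it:
anything orthogonal to all `E l` is orthogonal to all `G i`, and the size of `E` is at
most the size of `G`. -/
lemma exists_ortho_family {ι : Type*} [Fintype ι] (G : ι → (Fin n → ℝ)) :
    ∃ (m : ℕ) (E : Fin m → (Fin n → ℝ)),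
      m ≤ Fintype.card ι ∧
      (∀ l l', E l ⬝ᵥ E l' = if l = l' then 1 else 0) ∧
      (∀ z : Fin n → ℝ, (∀ l, E l ⬝ᵥ z = 0) → ∀ i, G i ⬝ᵥ z = 0) := by
  classical
  set F : ι → EuclideanSpace ℝ (Fin n) := fun i => fromE.symm (G i) with hF
  set W : Submodule ℝ (EuclideanSpace ℝ (Fin n)) := Submodule.span ℝ (Set.range F) with hW
  set m := Module.finrank ℝ ↥W with hm
  have hmk : m ≤ Fintype.card ι := by
    have h1 : Submodule.span ℝ (Set.range F)
        ≤ Submodule.span ℝ ((Finset.image F Finset.univ : Finset _) : Set _) := by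
      apply Submodule.span_mono
      rintro x ⟨i, rfl⟩
      exact Finset.mem_coe.mpr (Finset.mem_image_of_mem F (Finset.mem_univ i))
    have h2 := Submodule.finrank_mono (R := ℝ) (M := EuclideanSpace ℝ (Fin n)) h1
    have h3 := finrank_span_finset_le_card (R := ℝ) (Finset.image F Finset.univ)
    have h4 : (Finset.image F Finset.univ).card ≤ Fintype.card ι :=
      le_trans Finset.card_image_le Finset.card_univ.le
    rw [hm, hW]
    exact le_trans h2 (le_trans h3 h4)
  set ob := stdOrthonormalBasis ℝ ↥W with hob
  set E : Fin m → (Fin n → ℝ) := fun l => fromE ((ob l : EuclideanSpace ℝ (Fin n))) with hE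
  have hEdot : ∀ l l', E l ⬝ᵥ E l' = if l = l' then 1 else 0 := by
    intro l l'
    rw [hE]
    simp only
    rw [dot_eq_inner]
    have := orthonormal_iff_ite.mp ob.orthonormal l l'
    rw [Submodule.coe_inner] at this
    exact_mod_cast this
  refine ⟨m, E, hmk, hEdot, ?_⟩
  intro z hz i
  have hWdot : ∀ (x : EuclideanSpace ℝ (Fin n)), x ∈ W → fromE x ⬝ᵥ z = 0 := by
    intro x hx
    have hrepr := ob.sum_repr ⟨x, hx⟩
    have hcoe : x = ∑ l, (ob.repr ⟨x, hx⟩ l) • ((ob l : EuclideanSpace ℝ (Fin n))) := by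
      conv_lhs => rw [show x = ((⟨x, hx⟩ : W) : EuclideanSpace ℝ (Fin n)) from rfl, ← hrepr]
      push_cast
      rfl
    rw [hcoe, map_sum, sumr_dotProduct]
    refine Finset.sum_eq_zero fun l _ => ?_
    rw [LinearEquiv.map_smul, smul_dotProduct]
    rw [show fromE ((ob l : EuclideanSpace ℝ (Fin n))) = E l from rfl, hz l]
    simp
  have hmem : F i ∈ W := by
    rw [hW]
    exact Submodule.subset_span ⟨i, rfl⟩
  have := hWdot (F i) hmem
  rwa [hF] at this
  -- note: fromE (fromE.symm (G i)) = G i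
end Ortho

section Main
variable {d1 d2 : ℕ}

set_option maxHeartbeats 2000000 in
lemma minsum_subadd (A B : Matrix (Fin d1) (Fin d2) ℝ) (s : ℝ) (hs : 0 ≤ s) :
    ∑ j, min (singularValue (A + B) j) s
      ≤ ∑ j, min (singularValue A j) s + ∑ j, min (singularValue B j) s := by
  classical
  set C := A + B with hC
  set SA : Finset (Fin d2) := Finset.univ.filter (fun j => s < singularValue A j) with hSA
  set SB : Finset (Fin d2) := Finset.univ.filter (fun j => s < singularValue B j) with hSB
  set kA := SA.card with hkA
  set kB := SB.card with hkB
  -- orthonormal family spanning the "large" right singular vectors of A and B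
  obtain ⟨m, E, hmk, hEdot, hEspan⟩ := exists_ortho_family
    (Sum.elim (fun j : ↥SA => svdV A j.1) (fun j : ↥SB => svdV B j.1))
  rw [Fintype.card_sum, Fintype.card_coe, Fintype.card_coe] at hmk
  have hEorth : ∀ l l', l ≠ l' → E l ⬝ᵥ E l' = 0 := by
    intro l l' h; rw [hEdot, if_neg h]
  have hEnorm : ∀ l, E l ⬝ᵥ E l ≤ 1 := by
    intro l; rw [hEdot, if_pos rfl]
  have hEnorm1 : ∀ l, E l ⬝ᵥ E l = 1 := by
    intro l; rw [hEdot, if_pos rfl]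
  -- the projected test vectors
  set q : Fin d2 → (Fin d2 → ℝ) :=
    fun j => svdV C j - ∑ l, (E l ⬝ᵥ svdV C j) • E l with hq
  have hqE : ∀ l (j : Fin d2), E l ⬝ᵥ q j = 0 := by
    intro l j
    rw [hq]
    simp only
    rw [dotProduct_sub, dotProduct_sumr]
    rw [Finset.sum_eq_single l]
    · rw [dotProduct_smul, hEnorm1 l]; simp [dotProduct_comm]
    · intro l' _ hl'
      rw [dotProduct_smul, hEorth l l' (Ne.symm hl')]
      simp
    · simp
  have hqA : ∀ k (hk : k ∈ SA) (j : Fin d2), svdV A k ⬝ᵥ q j = 0 := by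
    intro k hk j
    exact hEspan (q j) (fun l => hqE l j) (Sum.inl ⟨k, hk⟩)
  have hqB : ∀ k (hk : k ∈ SB) (j : Fin d2), svdV B k ⬝ᵥ q j = 0 := by
    intro k hk j
    exact hEspan (q j) (fun l => hqE l j) (Sum.inr ⟨k, hk⟩)
  -- weights
  set w : Fin d2 → ℝ := fun j => ∑ l, (E l ⬝ᵥ svdV C j)^2 with hw
  have hVCnorm : ∀ j : Fin d2, svdV C j ⬝ᵥ svdV C j = 1 := by
    intro j; rw [svdV_ortho, if_pos rfl]
  have hw0 : ∀ j, 0 ≤ w j := fun j => Finset.sum_nonneg fun l _ => sq_nonneg _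
  have hw1 : ∀ j, w j ≤ 1 := by
    intro j
    calc w j ≤ svdV C j ⬝ᵥ svdV C j := bessel E hEorth hEnorm _
      _ = 1 := hVCnorm j
  have hVCorth : ∀ i j : Fin d2, i ≠ j → svdV C i ⬝ᵥ svdV C j = 0 := by
    intro i j h; rw [svdV_ortho, if_neg h]
  have hVCnorm' : ∀ j : Fin d2, svdV C j ⬝ᵥ svdV C j ≤ 1 := fun j => le_of_eq (hVCnorm j)
  have hwsum : ∑ j, w j ≤ ((kA + kB : ℕ) : ℝ) := by
    have swap : ∑ j, w j = ∑ l, ∑ j, (E l ⬝ᵥ svdV C j)^2 := Finset.sum_comm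
    have hle : ∀ l, ∑ j, (E l ⬝ᵥ svdV C j)^2 ≤ 1 := by
      intro l
      have : ∀ j : Fin d2, (E l ⬝ᵥ svdV C j)^2 = (svdV C j ⬝ᵥ E l)^2 := by
        intro j; rw [dotProduct_comm]
      calc ∑ j, (E l ⬝ᵥ svdV C j)^2 = ∑ j, (svdV C j ⬝ᵥ E l)^2 :=
            Finset.sum_congr rfl fun j _ => this j
        _ ≤ E l ⬝ᵥ E l := bessel (svdV C) hVCorth hVCnorm' _
        _ = 1 := hEnorm1 l
    calc ∑ j, w j = ∑ l, ∑ j, (E l ⬝ᵥ svdV C j)^2 := swap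
      _ ≤ ∑ _l : Fin m, (1:ℝ) := Finset.sum_le_sum fun l _ => hle l
      _ = (m : ℝ) := by simp
      _ ≤ ((kA + kB : ℕ) : ℝ) := by exact_mod_cast hmk
  have hqdot : ∀ j, svdV C j ⬝ᵥ q j = 1 - w j := by
    intro j
    rw [hq]
    simp only
    rw [dotProduct_sub, dotProduct_sumr, hVCnorm j, hw]
    congr 1
    refine Finset.sum_congr rfl fun l _ => ?_
    rw [dotProduct_smul, dotProduct_comm (svdV C j) (E l)]
    simp [sq, smul_eq_mul]
  -- Bessel property of the q family
  have hqBessel : ∀ x : Fin d2 → ℝ, ∑ j, (q j ⬝ᵥ x)^2 ≤ x ⬝ᵥ x := by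
    intro x
    set y : Fin d2 → ℝ := x - ∑ l, (E l ⬝ᵥ x) • E l with hy
    have hqx : ∀ j, q j ⬝ᵥ x = svdV C j ⬝ᵥ y := by
      intro j
      rw [hq, hy]
      simp only
      rw [sub_dotProduct, sumr_dotProduct, dotProduct_sub, dotProduct_sumr]
      congr 1
      refine Finset.sum_congr rfl fun l _ => ?_
      rw [smul_dotProduct, dotProduct_smul]
      rw [dotProduct_comm (E l) (svdV C j), dotProduct_comm (E l) x]
      simp [smul_eq_mul]
      ring
    have h1 : ∑ j, (q j ⬝ᵥ x)^2 = ∑ j, (svdV C j ⬝ᵥ y)^2 :=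
      Finset.sum_congr rfl fun j _ => by rw [hqx j]
    have h2 : ∑ j, (svdV C j ⬝ᵥ y)^2 ≤ y ⬝ᵥ y := bessel (svdV C) hVCorth hVCnorm' y
    have h3 : y ⬝ᵥ y ≤ x ⬝ᵥ x := by
      have := residual_dot_le E hEorth hEnorm x
      have h4 : 0 ≤ ∑ l, (E l ⬝ᵥ x)^2 := Finset.sum_nonneg fun l _ => sq_nonneg _
      rw [hy]
      linarith
    linarith
  -- top set
  obtain ⟨T, hTcard, hTtop⟩ := exists_top_set (singularValue C) (kA + kB)
  have hTle : (T.card : ℝ) ≤ ((kA + kB : ℕ) : ℝ) := by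
    exact_mod_cast hTcard ▸ Nat.cast_le.mpr (min_le_left _ _)
  -- weights bound
  have hweights : ∑ j, singularValue C j * w j ≤ ∑ j ∈ T, singularValue C j :=
    sum_weights_le_top (singularValue C) w (sv_nonneg C) hw0 hw1 (kA + kB)
      (by exact_mod_cast hwsum) T hTcard hTtop
  -- duality bounds
  have hdual : ∀ (M : Matrix (Fin d1) (Fin d2) ℝ) (SM : Finset (Fin d2)),
      (∀ k (_ : k ∈ SM) (j : Fin d2), svdV M k ⬝ᵥ q j = 0) →
      ∑ j, svdU C j ⬝ᵥ (M *ᵥ q j) ≤ ∑ k ∈ SMᶜ, singularValue M k := by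
    intro M SM hSM
    have expand : ∀ j, svdU C j ⬝ᵥ (M *ᵥ q j)
        = ∑ k, singularValue M k * ((svdU C j ⬝ᵥ svdU M k) * (q j ⬝ᵥ svdV M k)) := by
      intro j
      rw [svd_expand M (q j), dotProduct_sumr]
      refine Finset.sum_congr rfl fun k _ => ?_
      rw [dotProduct_smul, dotProduct_comm (q j) (svdV M k)]
      simp [smul_eq_mul]
      ring
    calc ∑ j, svdU C j ⬝ᵥ (M *ᵥ q j)
        = ∑ j, ∑ k, singularValue M k * ((svdU C j ⬝ᵥ svdU M k) * (q j ⬝ᵥ svdV M k)) :=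
          Finset.sum_congr rfl fun j _ => expand j
      _ = ∑ k, singularValue M k * (∑ j, (svdU C j ⬝ᵥ svdU M k) * (q j ⬝ᵥ svdV M k)) := by
          rw [Finset.sum_comm]
          exact Finset.sum_congr rfl fun k _ => by rw [Finset.mul_sum]
      _ ≤ ∑ k, (if k ∈ SM then 0 else singularValue M k) := by
          refine Finset.sum_le_sum fun k _ => ?_
          by_cases hk : k ∈ SM
          · rw [if_pos hk]
            have : ∀ j : Fin d2, (svdU C j ⬝ᵥ svdU M k) * (q j ⬝ᵥ svdV M k) = 0 := by
              intro j
              rw [dotProduct_comm (q j) (svdV M k), hSM k hk j, mul_zero]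
            rw [Finset.sum_congr rfl fun j _ => this j]
            simp
          · rw [if_neg hk]
            have hcs : ∑ j, (svdU C j ⬝ᵥ svdU M k) * (q j ⬝ᵥ svdV M k) ≤ 1 :=
              sum_dot_mul_dot_le (svdU C) q
                (bessel (svdU C) (svdU_ortho C) (svdU_norm C)) hqBessel
                (svdU M k) (svdV M k) (svdU_norm M k)
                (le_of_eq (by rw [svdV_ortho, if_pos rfl]))
            calc singularValue M k * (∑ j, (svdU C j ⬝ᵥ svdU M k) * (q j ⬝ᵥ svdV M k))
                ≤ singularValue M k * 1 := mul_le_mul_of_nonneg_left hcs (sv_nonneg M k)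
              _ = singularValue M k := mul_one _
      _ = ∑ k ∈ SMᶜ, singularValue M k := by
          have : ∀ k : Fin d2, (if k ∈ SM then 0 else singularValue M k)
              = (if k ∈ SMᶜ then singularValue M k else 0) := by
            intro k
            by_cases hk : k ∈ SM
            · rw [if_pos hk, if_neg (by simpa using hk)]
            · rw [if_neg hk, if_pos (Finset.mem_compl.mpr hk)]
          rw [Finset.sum_congr rfl fun k _ => this k, Finset.sum_ite_mem,
            Finset.univ_inter]
  have hdA := hdual A SA hqA
  have hdB := hdual B SB hqB
  have hminA : ∑ k, min (singularValue A k) s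
      = s * (kA : ℝ) + ∑ k ∈ SAᶜ, singularValue A k := by
    rw [← Finset.sum_add_sum_compl SA (fun k => min (singularValue A k) s)]
    congr 1
    · have hh : ∀ k ∈ SA, min (singularValue A k) s = s := by
        intro k hk
        have : s < singularValue A k := by
          rw [hSA] at hk
          exact (Finset.mem_filter.mp hk).2
        exact min_eq_right (le_of_lt this)
      rw [Finset.sum_congr rfl hh, Finset.sum_const, nsmul_eq_mul, mul_comm, hkA]
    · refine Finset.sum_congr rfl fun k hk => ?_
      have : ¬ s < singularValue A k := by
        intro hlt
        exact (Finset.mem_compl.mp hk)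
          (by rw [hSA]; exact Finset.mem_filter.mpr ⟨Finset.mem_univ k, hlt⟩)
      exact min_eq_left (not_lt.mp this)
  have hminB : ∑ k, min (singularValue B k) s
      = s * (kB : ℝ) + ∑ k ∈ SBᶜ, singularValue B k := by
    rw [← Finset.sum_add_sum_compl SB (fun k => min (singularValue B k) s)]
    congr 1
    · have hh : ∀ k ∈ SB, min (singularValue B k) s = s := by
        intro k hk
        have : s < singularValue B k := by
          rw [hSB] at hk
          exact (Finset.mem_filter.mp hk).2
        exact min_eq_right (le_of_lt this)
      rw [Finset.sum_congr rfl hh, Finset.sum_const, nsmul_eq_mul, mul_comm, hkB]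
    · refine Finset.sum_congr rfl fun k hk => ?_
      have : ¬ s < singularValue B k := by
        intro hlt
        exact (Finset.mem_compl.mp hk)
          (by rw [hSB]; exact Finset.mem_filter.mpr ⟨Finset.mem_univ k, hlt⟩)
      exact min_eq_left (not_lt.mp this)
  calc ∑ j, min (singularValue C j) s
      = ∑ j ∈ T, min (singularValue C j) s + ∑ j ∈ Tᶜ, min (singularValue C j) s :=
        (Finset.sum_add_sum_compl T _).symm
    _ ≤ (∑ _j ∈ T, s) + ∑ j ∈ Tᶜ, singularValue C j :=
        add_le_add (Finset.sum_le_sum fun j _ => min_le_right _ _)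
          (Finset.sum_le_sum fun j _ => min_le_left _ _)
    _ = s * (T.card : ℝ) + (∑ j, singularValue C j - ∑ j ∈ T, singularValue C j) := by
        rw [Finset.sum_const, nsmul_eq_mul, mul_comm]
        congr 1
        have := Finset.sum_add_sum_compl T (singularValue C)
        linarith
    _ ≤ s * ((kA + kB : ℕ) : ℝ)
        + (∑ j, singularValue C j - ∑ j, singularValue C j * w j) := by
        have h1 : s * (T.card : ℝ) ≤ s * ((kA + kB : ℕ) : ℝ) :=
          mul_le_mul_of_nonneg_left hTle hs
        linarith [hweights]
    _ = s * (kA : ℝ) + s * (kB : ℝ) + ∑ j, singularValue C j * (1 - w j) := by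
        rw [← Finset.sum_sub_distrib]
        have : ∀ j : Fin d2, singularValue C j - singularValue C j * w j
            = singularValue C j * (1 - w j) := fun j => by ring
        rw [Finset.sum_congr rfl fun j _ => this j]
        push_cast
        ring
    _ = s * (kA : ℝ) + s * (kB : ℝ) + ∑ j, svdU C j ⬝ᵥ (C *ᵥ q j) := by
        congr 1
        refine Finset.sum_congr rfl fun j _ => ?_
        rw [svd_adj C j (q j), hqdot j]
    _ = s * (kA : ℝ) + s * (kB : ℝ)
        + ((∑ j, svdU C j ⬝ᵥ (A *ᵥ q j)) + ∑ j, svdU C j ⬝ᵥ (B *ᵥ q j)) := by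
        congr 1
        rw [← Finset.sum_add_distrib]
        refine Finset.sum_congr rfl fun j _ => ?_
        rw [hC, Matrix.add_mulVec, dotProduct_add]
    _ ≤ s * (kA : ℝ) + s * (kB : ℝ)
        + ((∑ k ∈ SAᶜ, singularValue A k) + ∑ k ∈ SBᶜ, singularValue B k) := by
        linarith [hdA, hdB]
    _ = ∑ k, min (singularValue A k) s + ∑ k, min (singularValue B k) s := by
        rw [hminA, hminB]
        ring
end Main
end Rotfeld


namespace Rotfeld
open Finset

section Interp

lemma exists_min_rep (f : ℝ → ℝ) (hconc : ConcaveOn ℝ (Set.Ici 0) f)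
    (hmono : MonotoneOn f (Set.Ici 0)) (h0 : f 0 = 0)
    (R : Finset ℝ) (hR0 : (0:ℝ) ∈ R) (hRnn : ∀ x ∈ R, 0 ≤ x) :
    ∃ (m : ℕ) (sv : ℕ → ℝ) (c : ℕ → ℝ),
      (∀ i, 0 ≤ sv i) ∧ (∀ i, 0 ≤ c i) ∧
      ∀ x ∈ R, f x = ∑ i ∈ Finset.range m, c i * min x (sv i) := by
  classical
  obtain ⟨m, hcard⟩ : ∃ m, R.card = m + 1 :=
    ⟨R.card - 1, (Nat.succ_pred_eq_of_pos (Finset.card_pos.mpr ⟨0, hR0⟩)).symm⟩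
  set e := R.orderEmbOfFin hcard with he
  set T : ℕ → ℝ := fun i => e ⟨min i m, Nat.lt_succ_of_le (min_le_right i m)⟩ with hT
  have hTmem : ∀ i, T i ∈ R := fun i => Finset.orderEmbOfFin_mem R hcard _
  have hTnn : ∀ i, 0 ≤ T i := fun i => hRnn _ (hTmem i)
  have hTmono : ∀ i j, i ≤ j → T i ≤ T j := by
    intro i j hij
    apply (R.orderEmbOfFin hcard).monotone
    simp only [Fin.mk_le_mk]
    omega
  have hTstrict : ∀ i j, i < j → j ≤ m → T i < T j := by
    intro i j hij hjm
    apply (R.orderEmbOfFin hcard).strictMono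
    simp only [Fin.mk_lt_mk]
    omega
  have hT0 : T 0 = 0 := by
    have h0mem : (0:ℝ) ∈ Set.range ⇑(R.orderEmbOfFin hcard) := by
      rw [Finset.range_orderEmbOfFin]
      exact_mod_cast hR0
    obtain ⟨i₀, hi₀⟩ := h0mem
    have h1 : T 0 ≤ 0 := by
      rw [← hi₀, hT]
      apply (R.orderEmbOfFin hcard).monotone
      simp [Fin.le_def]
    exact le_antisymm h1 (hTnn 0)
  have hRT : ∀ x ∈ R, ∃ k, k ≤ m ∧ T k = x := by
    intro x hx
    obtain ⟨i, hi⟩ : x ∈ Set.range (R.orderEmbOfFin hcard) := by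
      rw [Finset.range_orderEmbOfFin]; exact hx
    refine ⟨i.1, Nat.lt_succ_iff.mp i.2, ?_⟩
    rw [hT]
    simp only
    rw [← hi]
    congr 1
    exact Fin.ext (by simp [Nat.min_eq_left (Nat.lt_succ_iff.mp i.2)])
  set a : ℕ → ℝ := fun i =>
    if i < m then (f (T (i+1)) - f (T i)) / (T (i+1) - T i) else 0 with ha
  set c : ℕ → ℝ := fun i => a i - a (i+1) with hc
  have hd : ∀ i, i < m → 0 < T (i+1) - T i := by
    intro i hi
    have := hTstrict i (i+1) (Nat.lt_succ_self i) (by omega)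
    linarith
  have ha0 : ∀ i, 0 ≤ a i := by
    intro i
    simp only [ha]
    by_cases hi : i < m
    · rw [if_pos hi]
      apply div_nonneg _ (le_of_lt (hd i hi))
      have := hmono (Set.mem_Ici.mpr (hTnn i)) (Set.mem_Ici.mpr (hTnn (i+1)))
        (hTmono i (i+1) (Nat.le_succ i))
      linarith
    · rw [if_neg hi]
  have haanti : ∀ i, a (i+1) ≤ a i := by
    intro i
    by_cases h1 : i + 1 < m
    · have hi : i < m := by omega
      simp only [ha]
      rw [if_pos h1, if_pos hi]
      exact hconc.slope_anti_adjacent (Set.mem_Ici.mpr (hTnn i))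
        (Set.mem_Ici.mpr (hTnn (i+2)))
        (hTstrict i (i+1) (Nat.lt_succ_self i) (by omega))
        (hTstrict (i+1) (i+2) (Nat.lt_succ_self _) (by omega))
    · have : a (i+1) = 0 := by simp only [ha]; rw [if_neg h1]
      rw [this]
      exact ha0 i
  have hc0 : ∀ i, 0 ≤ c i := fun i => by simp only [hc]; linarith [haanti i]
  have ham : a m = 0 := by simp [ha]
  have key : ∀ k, k ≤ m → f (T k) = ∑ i ∈ Finset.range m, c i * min (T k) (T (i+1)) := by
    intro k
    induction k with
    | zero =>
      intro _
      rw [hT0, h0]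
      symm
      refine Finset.sum_eq_zero fun i _ => ?_
      rw [min_eq_left (hTnn (i+1))]
      ring
    | succ k ih =>
      intro hk1
      have hkm : k < m := hk1
      have ihv := ih (le_of_lt hkm)
      have hstep : ∀ i ∈ Finset.range m,
          c i * min (T (k+1)) (T (i+1)) - c i * min (T k) (T (i+1))
            = c i * (if k ≤ i then T (k+1) - T k else 0) := by
        intro i hi
        rw [Finset.mem_range] at hi
        by_cases hki : k ≤ i
        · rw [if_pos hki]
          rw [min_eq_left (hTmono (k+1) (i+1) (by omega)),
            min_eq_left (hTmono k (i+1) (by omega))]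
          ring
        · rw [if_neg hki]
          rw [min_eq_right (hTmono (i+1) (k+1) (by omega)),
            min_eq_right (hTmono (i+1) k (by omega))]
          ring
      have hsum : ∑ i ∈ Finset.range m, c i * min (T (k+1)) (T (i+1))
          - ∑ i ∈ Finset.range m, c i * min (T k) (T (i+1))
          = (T (k+1) - T k) * ∑ i ∈ Finset.Ico k m, c i := by
        rw [← Finset.sum_sub_distrib, Finset.sum_congr rfl hstep]
        have h1 : ∀ i : ℕ, c i * (if k ≤ i then T (k+1) - T k else 0)
            = if k ≤ i then c i * (T (k+1) - T k) else 0 := by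
          intro i
          by_cases hki : k ≤ i
          · rw [if_pos hki, if_pos hki]
          · rw [if_neg hki, if_neg hki, mul_zero]
        rw [Finset.sum_congr rfl fun i _ => h1 i, ← Finset.sum_filter]
        have h2 : (Finset.range m).filter (fun i => k ≤ i) = Finset.Ico k m := by
          ext i
          simp only [Finset.mem_filter, Finset.mem_range, Finset.mem_Ico]
          omega
        rw [h2, ← Finset.sum_mul]
        ring
      have htel : ∑ i ∈ Finset.Ico k m, c i = a k := by
        have e1 : ∑ i ∈ Finset.range m, (a i - a (i+1)) = a 0 - a m :=
          Finset.sum_range_sub' a m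
        have e2 : ∑ i ∈ Finset.range k, (a i - a (i+1)) = a 0 - a k :=
          Finset.sum_range_sub' a k
        have e3 : ∑ i ∈ Finset.Ico k m, c i
            = ∑ i ∈ Finset.range m, (a i - a (i+1)) - ∑ i ∈ Finset.range k, (a i - a (i+1)) := by
          rw [Finset.sum_Ico_eq_sub _ (le_of_lt hkm)]
        rw [e3, e1, e2, ham]
        ring
      have hak : a k * (T (k+1) - T k) = f (T (k+1)) - f (T k) := by
        simp only [ha]
        rw [if_pos hkm]
        have := hd k hkm
        field_simp
      rw [htel] at hsum
      have : f (T (k+1)) = f (T k) + a k * (T (k+1) - T k) := by rw [hak]; ring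
      rw [this, ihv]
      linarith
  refine ⟨m, fun i => T (i+1), c, fun i => hTnn (i+1), hc0, ?_⟩
  intro x hx
  obtain ⟨k, hkm, rfl⟩ := hRT x hx
  exact key k hkm
end Interp
end Rotfeld


/-- Rotfel'd inequality: for concave increasing `f : ℝ₊ → ℝ₊` with
`f 0 = 0`, `∑ f(σ_j(Θ + Θ')) ≤ ∑ f(σ_j Θ) + ∑ f(σ_j Θ')`. -/
theorem rotfeld_subadditive {d1 d2 : ℕ} (f : ℝ → ℝ)
    (hconc : ConcaveOn ℝ (Set.Ici 0) f) (hmono : MonotoneOn f (Set.Ici 0))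
    (h0 : f 0 = 0) (hnn : ∀ t : ℝ, 0 ≤ t → 0 ≤ f t)
    (A B : Matrix (Fin d1) (Fin d2) ℝ) :
    singValSum f (A + B) ≤ singValSum f A + singValSum f B := by
  classical
  set R : Finset ℝ := insert (0:ℝ)
    ((Finset.univ.image (singularValue A) ∪ Finset.univ.image (singularValue B))
      ∪ Finset.univ.image (singularValue (A + B))) with hR
  have hR0 : (0:ℝ) ∈ R := Finset.mem_insert_self _ _
  have hRnn : ∀ x ∈ R, 0 ≤ x := by
    intro x hx
    rw [hR] at hx
    rcases Finset.mem_insert.mp hx with rfl | hx'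
    · exact le_refl 0
    · rcases Finset.mem_union.mp hx' with hx'' | hx3
      · rcases Finset.mem_union.mp hx'' with hx1 | hx2
        · obtain ⟨j, -, rfl⟩ := Finset.mem_image.mp hx1
          exact Rotfeld.sv_nonneg A j
        · obtain ⟨j, -, rfl⟩ := Finset.mem_image.mp hx2
          exact Rotfeld.sv_nonneg B j
      · obtain ⟨j, -, rfl⟩ := Finset.mem_image.mp hx3
        exact Rotfeld.sv_nonneg (A + B) j
  obtain ⟨m, sv, c, hsv, hc, hrep⟩ := Rotfeld.exists_min_rep f hconc hmono h0 R hR0 hRnn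
  have hmemA : ∀ j, singularValue A j ∈ R := fun j => by
    rw [hR]
    exact Finset.mem_insert_of_mem (Finset.mem_union_left _
      (Finset.mem_union_left _ (Finset.mem_image_of_mem _ (Finset.mem_univ j))))
  have hmemB : ∀ j, singularValue B j ∈ R := fun j => by
    rw [hR]
    exact Finset.mem_insert_of_mem (Finset.mem_union_left _
      (Finset.mem_union_right _ (Finset.mem_image_of_mem _ (Finset.mem_univ j))))
  have hmemC : ∀ j, singularValue (A + B) j ∈ R := fun j => by
    rw [hR]
    exact Finset.mem_insert_of_mem (Finset.mem_union_right _
      (Finset.mem_image_of_mem _ (Finset.mem_univ j)))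
  have key : ∀ (M : Matrix (Fin d1) (Fin d2) ℝ),
      (∀ j, singularValue M j ∈ R) →
      singValSum f M = ∑ i ∈ Finset.range m, c i * ∑ j, min (singularValue M j) (sv i) := by
    intro M hmem
    rw [singValSum]
    rw [Finset.sum_congr rfl fun j _ => hrep _ (hmem j)]
    rw [Finset.sum_comm]
    exact Finset.sum_congr rfl fun i _ => by rw [Finset.mul_sum]
  rw [key A hmemA, key B hmemB, key (A + B) hmemC, ← Finset.sum_add_distrib]
  refine Finset.sum_le_sum fun i _ => ?_
  rw [← mul_add]
  exact mul_le_mul_of_nonneg_left (Rotfeld.minsum_subadd A B (sv i) (hsv i)) (hc i)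
end

section
/- Suppose the spectral regularizer $\mathcal{P}_\lambda(\Theta)=\sum_{j=1}^d p_\lambda(\sigma_j(\Theta))$ is built from a function $p_\lambda:\mathbb{R}_+\to\mathbb{R}_+$ that is concave, nondecreasing, with $p_\lambda(0)=0$ and $p_\lambda(t)/t$ nonincreasing for $t>0$. Then for all matrices $\Theta,\Theta'\in\mathbb{R}^{d_1\times d_2}$: $\mathcal{P}_\lambda(\Theta+\Theta')\le\mathcal{P}_\lambda(\Theta)+\mathcal{P}_\lambda(\Theta')$ and $\mathcal{P}_\lambda(\Theta-\Theta')\ge\mathcal{P}_\lambda(\Theta)-\mathcal{P}_\lambda(\Theta')$. -/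
/-- The spectral regularizer `𝒫_λ(Θ) = ∑_j p_λ(σ_j(Θ))`. -/
noncomputable def specReg {d1 d2 : ℕ} (p : ℝ → ℝ)
    (A : Matrix (Fin d1) (Fin d2) ℝ) : ℝ :=
  ∑ j, p (singularValue A j)

namespace RotfeldAux

open Matrix Finset

variable {d1 d2 : ℕ}

/-! ### Generalities on the Frobenius pairing and contractions -/

/-- Frobenius pairing `tr (Mᵀ C)`. -/
noncomputable def frob {m n : ℕ} (M C : Matrix (Fin m) (Fin n) ℝ) : ℝ :=
  Matrix.trace (Mᵀ * C)

/-- `M` is a contraction. -/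
def Contra {m n : ℕ} (M : Matrix (Fin m) (Fin n) ℝ) : Prop :=
  ∀ x : Fin n → ℝ, (M *ᵥ x) ⬝ᵥ (M *ᵥ x) ≤ x ⬝ᵥ x

lemma frob_add_right {m n : ℕ} (M A B : Matrix (Fin m) (Fin n) ℝ) :
    frob M (A + B) = frob M A + frob M B := by
  simp [frob, Matrix.mul_add]

lemma frob_mul_right {m n : ℕ} (M C : Matrix (Fin m) (Fin n) ℝ)
    (P : Matrix (Fin n) (Fin n) ℝ) :
    frob M (C * P) = frob (M * Pᵀ) C := by
  unfold frob
  rw [Matrix.transpose_mul, Matrix.transpose_transpose, ← Matrix.mul_assoc,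
    Matrix.trace_mul_comm, ← Matrix.mul_assoc]

lemma dot_mulVec_left {m n : ℕ} (C : Matrix (Fin m) (Fin n) ℝ) (u : Fin m → ℝ)
    (y : Fin n → ℝ) : u ⬝ᵥ (C *ᵥ y) = (Cᵀ *ᵥ u) ⬝ᵥ y := by
  rw [Matrix.dotProduct_mulVec, ← Matrix.vecMul_transpose, Matrix.transpose_transpose]

lemma Contra.mul {m n : ℕ} {M : Matrix (Fin m) (Fin n) ℝ}
    {P : Matrix (Fin n) (Fin n) ℝ} (hM : Contra M) (hP : Contra P) :
    Contra (M * P) := fun x => by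
  rw [← Matrix.mulVec_mulVec]
  exact (hM _).trans (hP x)

lemma dot_self_nonneg {n : ℕ} (x : Fin n → ℝ) : 0 ≤ x ⬝ᵥ x :=
  Finset.sum_nonneg fun i _ => mul_self_nonneg _

/-- Cauchy-Schwarz style: if both vectors have square norm at most one, the
dot product is at most one. -/
lemma dot_le_one {n : ℕ} {a b : Fin n → ℝ} (ha : a ⬝ᵥ a ≤ 1) (hb : b ⬝ᵥ b ≤ 1) :
    a ⬝ᵥ b ≤ 1 := by
  have h := Finset.sum_mul_sq_le_sq_mul_sq Finset.univ a b
  have ha' : ∑ i, a i ^ 2 ≤ 1 := by simpa [dotProduct, sq] using ha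
  have hb' : ∑ i, b i ^ 2 ≤ 1 := by simpa [dotProduct, sq] using hb
  have ha0 : (0:ℝ) ≤ ∑ i, a i ^ 2 := Finset.sum_nonneg fun i _ => sq_nonneg _
  have hb0 : (0:ℝ) ≤ ∑ i, b i ^ 2 := Finset.sum_nonneg fun i _ => sq_nonneg _
  have hd : (a ⬝ᵥ b) ^ 2 ≤ 1 := by
    have : (∑ i, a i * b i) ^ 2 ≤ 1 := by nlinarith
    simpa [dotProduct] using this
  nlinarith [hd]

/-! ### Resolutions of the identity -/

/-- The family `v` gives a resolution of the identity: `∑ j, v j (v j)ᵀ = 1`. -/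
def Resol {n : ℕ} (v : Fin n → Fin n → ℝ) : Prop :=
  ∀ a b, ∑ j, v j a * v j b = (if a = b then (1 : ℝ) else 0)

lemma resol_of_onb {n : ℕ} (v : Fin n → Fin n → ℝ)
    (hv : ∀ a b, v a ⬝ᵥ v b = (if a = b then (1 : ℝ) else 0)) : Resol v := by
  classical
  set V : Matrix (Fin n) (Fin n) ℝ := Matrix.of (fun i j => v j i) with hV
  have h1 : Vᵀ * V = 1 := by
    ext a b
    simpa [Matrix.mul_apply, V, Matrix.one_apply, dotProduct] using hv a b
  have h2 : V * Vᵀ = 1 := mul_eq_one_comm.mp h1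
  intro a b
  have := congrFun (congrFun h2 a) b
  simpa [Matrix.mul_apply, V, Matrix.one_apply] using this

lemma Resol.parseval {n : ℕ} {v : Fin n → Fin n → ℝ} (h : Resol v)
    (x y : Fin n → ℝ) : ∑ j, (v j ⬝ᵥ x) * (v j ⬝ᵥ y) = x ⬝ᵥ y := by
  classical
  set V : Matrix (Fin n) (Fin n) ℝ := Matrix.of (fun i j => v j i) with hV
  have h2 : V * Vᵀ = 1 := by
    ext a b
    simpa [Matrix.mul_apply, V, Matrix.one_apply] using h a b
  have hx : ∀ j, (Vᵀ *ᵥ x) j = v j ⬝ᵥ x := by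
    intro j; simp [Matrix.mulVec, V, dotProduct]
  have : (Vᵀ *ᵥ x) ⬝ᵥ (Vᵀ *ᵥ y) = x ⬝ᵥ y := by
    rw [Matrix.dotProduct_mulVec, Matrix.vecMul_transpose, Matrix.mulVec_mulVec, h2,
      Matrix.one_mulVec]
  calc ∑ j, (v j ⬝ᵥ x) * (v j ⬝ᵥ y) = (Vᵀ *ᵥ x) ⬝ᵥ (Vᵀ *ᵥ y) := by
        simp [dotProduct, Matrix.mulVec, V]
    _ = x ⬝ᵥ y := this

lemma trace_transpose_mul {m n : ℕ} (D E : Matrix (Fin m) (Fin n) ℝ) :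
    Matrix.trace (Dᵀ * E) = ∑ j, ∑ i, D i j * E i j := by
  simp [Matrix.trace, Matrix.mul_apply, Matrix.diag]

lemma Resol.frob_expand {m n : ℕ} {v : Fin n → Fin n → ℝ} (h : Resol v)
    (M C : Matrix (Fin m) (Fin n) ℝ) :
    frob M C = ∑ j, (M *ᵥ v j) ⬝ᵥ (C *ᵥ v j) := by
  have h1 : ∀ i : Fin m, ∑ j, (M *ᵥ v j) i * (C *ᵥ v j) i
      = (fun a => M i a) ⬝ᵥ (fun a => C i a) := by
    intro i
    rw [← h.parseval (fun a => M i a) (fun a => C i a)]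
    refine Finset.sum_congr rfl fun j _ => ?_
    simp [Matrix.mulVec, dotProduct, mul_comm]
  calc frob M C = ∑ j, ∑ i, M i j * C i j := trace_transpose_mul M C
    _ = ∑ i, ∑ j, M i j * C i j := Finset.sum_comm
    _ = ∑ i, (fun a => M i a) ⬝ᵥ (fun a => C i a) := rfl
    _ = ∑ i, ∑ j, (M *ᵥ v j) i * (C *ᵥ v j) i :=
        Finset.sum_congr rfl fun i _ => (h1 i).symm
    _ = ∑ j, ∑ i, (M *ᵥ v j) i * (C *ᵥ v j) i := Finset.sum_comm
    _ = ∑ j, (M *ᵥ v j) ⬝ᵥ (C *ᵥ v j) := rfl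

lemma dot_mulVec_left' {m n : ℕ} (C : Matrix (Fin m) (Fin n) ℝ) (y : Fin n → ℝ)
    (w : Fin m → ℝ) : (C *ᵥ y) ⬝ᵥ w = y ⬝ᵥ (Cᵀ *ᵥ w) := by
  rw [dotProduct_comm, dot_mulVec_left, dotProduct_comm]

lemma sum_dot {n : ℕ} {ι : Type*} (s : Finset ι) (f : ι → (Fin n → ℝ)) (y : Fin n → ℝ) :
    (∑ k ∈ s, f k) ⬝ᵥ y = ∑ k ∈ s, f k ⬝ᵥ y := by
  simp only [dotProduct, Finset.sum_apply, Finset.sum_mul]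
  rw [Finset.sum_comm]

lemma dot_sum {n : ℕ} {ι : Type*} (s : Finset ι) (y : Fin n → ℝ) (f : ι → (Fin n → ℝ)) :
    y ⬝ᵥ (∑ k ∈ s, f k) = ∑ k ∈ s, y ⬝ᵥ f k := by
  simp only [dotProduct, Finset.sum_apply, Finset.mul_sum]
  rw [Finset.sum_comm]

/-! ### Singular value decomposition -/

lemma singularValue_nonneg (C : Matrix (Fin d1) (Fin d2) ℝ) (j : Fin d2) :
    0 ≤ singularValue C j := Real.sqrt_nonneg _

lemma singularValue_sq (C : Matrix (Fin d1) (Fin d2) ℝ) (j : Fin d2) :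
    singularValue C j ^ 2 = (Matrix.isHermitian_conjTranspose_mul_self C).eigenvalues j := by
  unfold singularValue
  rw [Real.sq_sqrt (Matrix.eigenvalues_conjTranspose_mul_self_nonneg C j)]

/-- Data of a singular value decomposition. -/
structure SVD (C : Matrix (Fin d1) (Fin d2) ℝ) where
  v : Fin d2 → Fin d2 → ℝ
  u : Fin d2 → Fin d1 → ℝ
  hv : ∀ a b, v a ⬝ᵥ v b = (if a = b then (1 : ℝ) else 0)
  hCv : ∀ j, C *ᵥ v j = singularValue C j • u j
  hCtu : ∀ j, Cᵀ *ᵥ u j = singularValue C j • v j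
  hu : ∀ j k, u j ⬝ᵥ u k =
    (if j = k ∧ singularValue C j ≠ 0 then (1 : ℝ) else 0)

lemma SVD.hres {C : Matrix (Fin d1) (Fin d2) ℝ} (S : SVD C) : Resol S.v :=
  resol_of_onb _ S.hv

noncomputable def svd (C : Matrix (Fin d1) (Fin d2) ℝ) : SVD C := by
  classical
  let hherm := Matrix.isHermitian_conjTranspose_mul_self C
  let lam : Fin d2 → ℝ := hherm.eigenvalues
  let v : Fin d2 → Fin d2 → ℝ := fun j => ⇑(hherm.eigenvectorBasis j)
  have hlam_nonneg : ∀ j, 0 ≤ lam j := Matrix.eigenvalues_conjTranspose_mul_self_nonneg C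
  have hσsq : ∀ j, singularValue C j ^ 2 = lam j := singularValue_sq C
  have hσnn : ∀ j, 0 ≤ singularValue C j := singularValue_nonneg C
  have hv : ∀ a b, v a ⬝ᵥ v b = (if a = b then (1 : ℝ) else 0) := by
    intro a b
    have := (orthonormal_iff_ite (𝕜 := ℝ)).mp hherm.eigenvectorBasis.orthonormal a b
    rw [dotProduct_comm]
    simpa [PiLp.inner_apply, RCLike.inner_apply, dotProduct, v] using this
  have hkey : ∀ j, Cᵀ *ᵥ (C *ᵥ v j) = lam j • v j := by
    intro j
    have h := hherm.mulVec_eigenvectorBasis j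
    rw [Matrix.mulVec_mulVec, show Cᵀ * C = Cᴴ * C by
      rw [Matrix.conjTranspose_eq_transpose_of_trivial]]
    exact h
  have hCvdot : ∀ j k, (C *ᵥ v j) ⬝ᵥ (C *ᵥ v k) = (if j = k then lam j else 0) := by
    intro j k
    have e1 : (C *ᵥ v j) ⬝ᵥ (C *ᵥ v k) = v j ⬝ᵥ (Cᵀ *ᵥ (C *ᵥ v k)) :=
      dot_mulVec_left' C (v j) (C *ᵥ v k)
    rw [e1, hkey k, dotProduct_smul, hv]
    by_cases h : j = k <;> simp [h, smul_eq_mul]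
  have hCv0 : ∀ j, singularValue C j = 0 → C *ᵥ v j = 0 := by
    intro j hj
    have h := hCvdot j j
    rw [if_pos rfl, ← hσsq j, hj] at h
    exact dotProduct_self_eq_zero.mp (by simpa using h)
  let u : Fin d2 → Fin d1 → ℝ := fun j => (singularValue C j)⁻¹ • (C *ᵥ v j)
  have hCv : ∀ j, C *ᵥ v j = singularValue C j • u j := by
    intro j
    by_cases h : singularValue C j = 0
    · rw [hCv0 j h, h, zero_smul]
    · show C *ᵥ v j = singularValue C j • (singularValue C j)⁻¹ • (C *ᵥ v j)
      rw [smul_smul, mul_inv_cancel₀ h, one_smul]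
  have hu0 : ∀ j, singularValue C j = 0 → u j = 0 := by
    intro j h
    show (singularValue C j)⁻¹ • (C *ᵥ v j) = 0
    rw [hCv0 j h, smul_zero]
  refine ⟨v, u, hv, hCv, ?_, ?_⟩
  · intro j
    by_cases h : singularValue C j = 0
    · rw [hu0 j h, h, zero_smul, Matrix.mulVec_zero]
    · show Cᵀ *ᵥ ((singularValue C j)⁻¹ • (C *ᵥ v j)) = _
      rw [Matrix.mulVec_smul, hkey, ← hσsq j, smul_smul]
      congr 1
      rw [sq, ← mul_assoc, inv_mul_cancel₀ h, one_mul]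
  · intro j k
    show ((singularValue C j)⁻¹ • (C *ᵥ v j)) ⬝ᵥ ((singularValue C k)⁻¹ • (C *ᵥ v k)) = _
    rw [smul_dotProduct, dotProduct_smul, hCvdot]
    by_cases hjk : j = k
    · subst hjk
      by_cases h : singularValue C j = 0
      · simp [h]
      · rw [if_pos rfl, if_pos ⟨rfl, h⟩, ← hσsq j]
        field_simp
        rw [smul_smul, smul_eq_mul, ← sq, ← mul_pow, one_div, inv_mul_cancel₀ h, one_pow]
    · simp [hjk]

/-! ### Trace norm -/

noncomputable def traceNorm (C : Matrix (Fin d1) (Fin d2) ℝ) : ℝ :=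
  ∑ j, singularValue C j

lemma frob_le_traceNorm {M C : Matrix (Fin d1) (Fin d2) ℝ} (hM : Contra M) :
    frob M C ≤ traceNorm C := by
  classical
  obtain ⟨v, u, hv, hCv, hCtu, hu⟩ := svd C
  have hres : Resol v := resol_of_onb _ hv
  rw [hres.frob_expand]
  refine Finset.sum_le_sum fun j _ => ?_
  rw [hCv j, dotProduct_smul, smul_eq_mul]
  by_cases h : singularValue C j = 0
  · simp [h]
  · have h1 : (M *ᵥ v j) ⬝ᵥ (M *ᵥ v j) ≤ 1 := by
      have := hM (v j)
      rwa [hv j j, if_pos rfl] at this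
    have h2 : u j ⬝ᵥ u j ≤ 1 := by rw [hu j j, if_pos ⟨rfl, h⟩]
    have h3 : (M *ᵥ v j) ⬝ᵥ u j ≤ 1 := dot_le_one h1 h2
    calc singularValue C j * ((M *ᵥ v j) ⬝ᵥ u j) ≤ singularValue C j * 1 :=
          mul_le_mul_of_nonneg_left h3 (singularValue_nonneg C j)
      _ = singularValue C j := mul_one _

/-- The polar partial isometry attached to an SVD. -/
noncomputable def SVD.polar {C : Matrix (Fin d1) (Fin d2) ℝ} (S : SVD C) :
    Matrix (Fin d1) (Fin d2) ℝ :=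
  ∑ k, Matrix.vecMulVec (S.u k) (S.v k)

lemma vecMulVec_mulVec {m n : ℕ} (u : Fin m → ℝ) (v : Fin n → ℝ) (x : Fin n → ℝ) :
    Matrix.vecMulVec u v *ᵥ x = (v ⬝ᵥ x) • u := by
  ext i
  simp [Matrix.mulVec, Matrix.vecMulVec_apply, dotProduct, Finset.mul_sum,
    Pi.smul_apply, smul_eq_mul, mul_comm, mul_left_comm]

lemma sum_matrix_mulVec {m n : ℕ} {ι : Type*} (s : Finset ι)
    (f : ι → Matrix (Fin m) (Fin n) ℝ) (x : Fin n → ℝ) :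
    (∑ k ∈ s, f k) *ᵥ x = ∑ k ∈ s, f k *ᵥ x := by
  ext i
  simp only [Matrix.mulVec, dotProduct, Matrix.sum_apply, Finset.sum_apply, Finset.sum_mul]
  rw [Finset.sum_comm]

lemma SVD.polar_mulVec_v {C : Matrix (Fin d1) (Fin d2) ℝ} (S : SVD C) (j : Fin d2) :
    S.polar *ᵥ S.v j = S.u j := by
  classical
  rw [SVD.polar, sum_matrix_mulVec]
  have : ∀ k, Matrix.vecMulVec (S.u k) (S.v k) *ᵥ S.v j
      = (if k = j then S.u k else 0) := by
    intro k
    rw [vecMulVec_mulVec, S.hv k j]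
    by_cases h : k = j <;> simp [h]
  rw [Finset.sum_congr rfl fun k _ => this k]
  simp

lemma SVD.polar_contra {C : Matrix (Fin d1) (Fin d2) ℝ} (S : SVD C) :
    Contra S.polar := by
  classical
  intro x
  rw [SVD.polar, sum_matrix_mulVec]
  have hexp : ∀ k, Matrix.vecMulVec (S.u k) (S.v k) *ᵥ x = (S.v k ⬝ᵥ x) • S.u k :=
    fun k => vecMulVec_mulVec _ _ _
  rw [Finset.sum_congr rfl fun k _ => hexp k]
  have : (∑ k, (S.v k ⬝ᵥ x) • S.u k) ⬝ᵥ (∑ l, (S.v l ⬝ᵥ x) • S.u l)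
      = ∑ k, ∑ l, (S.v k ⬝ᵥ x) * (S.v l ⬝ᵥ x) * (S.u k ⬝ᵥ S.u l) := by
    rw [sum_dot]
    refine Finset.sum_congr rfl fun k _ => ?_
    rw [dot_sum]
    refine Finset.sum_congr rfl fun l _ => ?_
    rw [smul_dotProduct, dotProduct_smul]
    simp [smul_eq_mul]; ring
  rw [this]
  have hterm : ∀ k, ∑ l, (S.v k ⬝ᵥ x) * (S.v l ⬝ᵥ x) * (S.u k ⬝ᵥ S.u l)
      ≤ (S.v k ⬝ᵥ x) * (S.v k ⬝ᵥ x) := by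
    intro k
    have : ∀ l, (S.v k ⬝ᵥ x) * (S.v l ⬝ᵥ x) * (S.u k ⬝ᵥ S.u l)
        = if l = k then (S.v k ⬝ᵥ x) * (S.v k ⬝ᵥ x) *
            (if singularValue C k ≠ 0 then 1 else 0) else 0 := by
      intro l
      rw [S.hu k l]
      by_cases h : l = k
      · subst h; by_cases h2 : singularValue C l = 0 <;> simp [h2]
      · have : ¬(k = l ∧ singularValue C k ≠ 0) := fun ⟨h1, _⟩ => h h1.symm
        simp [this, h]
    rw [Finset.sum_congr rfl fun l _ => this l, Finset.sum_ite_eq' Finset.univ k]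
    by_cases h2 : singularValue C k ≠ 0 <;> simp [h2, mul_self_nonneg]
  calc _ ≤ ∑ k, (S.v k ⬝ᵥ x) * (S.v k ⬝ᵥ x) := Finset.sum_le_sum fun k _ => hterm k
    _ = x ⬝ᵥ x := S.hres.parseval x x

lemma SVD.frob_polar {C : Matrix (Fin d1) (Fin d2) ℝ} (S : SVD C) :
    frob S.polar C = traceNorm C := by
  classical
  rw [S.hres.frob_expand]
  have : ∀ j, (S.polar *ᵥ S.v j) ⬝ᵥ (C *ᵥ S.v j) = singularValue C j := by
    intro j
    rw [S.polar_mulVec_v, S.hCv, dotProduct_smul, S.hu j j, smul_eq_mul]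
    by_cases h : singularValue C j = 0
    · simp [h]
    · rw [if_pos ⟨rfl, h⟩, mul_one]
  rw [Finset.sum_congr rfl fun j _ => this j]
  rfl

lemma traceNorm_triangle (A B : Matrix (Fin d1) (Fin d2) ℝ) :
    traceNorm (A + B) ≤ traceNorm A + traceNorm B := by
  have S := svd (A + B)
  calc traceNorm (A + B) = frob S.polar (A + B) := (S.frob_polar).symm
    _ = frob S.polar A + frob S.polar B := frob_add_right _ _ _
    _ ≤ traceNorm A + traceNorm B :=
        add_le_add (frob_le_traceNorm S.polar_contra) (frob_le_traceNorm S.polar_contra)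

lemma traceNorm_mul_le (C : Matrix (Fin d1) (Fin d2) ℝ)
    (P : Matrix (Fin d2) (Fin d2) ℝ) (hP : Contra Pᵀ) :
    traceNorm (C * P) ≤ traceNorm C := by
  have S := svd (C * P)
  calc traceNorm (C * P) = frob S.polar (C * P) := (S.frob_polar).symm
    _ = frob (S.polar * Pᵀ) C := frob_mul_right _ _ _
    _ ≤ traceNorm C := frob_le_traceNorm (S.polar_contra.mul hP)

/-! ### Projection complementary to a finite set of vectors -/

lemma exists_proj (F : Finset (EuclideanSpace ℝ (Fin d2))) :
    ∃ (P : Matrix (Fin d2) (Fin d2) ℝ) (r : ℕ),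
      Pᵀ = P ∧ (r ≤ F.card) ∧
      (∀ y ∈ F, P *ᵥ (y : Fin d2 → ℝ) = 0) ∧
      (∀ x : Fin d2 → ℝ, 0 ≤ x ⬝ᵥ (P *ᵥ x)) ∧
      (∀ x : Fin d2 → ℝ, x ⬝ᵥ (P *ᵥ x) ≤ x ⬝ᵥ x) ∧
      Contra P ∧
      (∀ v : Fin d2 → Fin d2 → ℝ, Resol v →
        (d2 : ℝ) - r ≤ ∑ j, v j ⬝ᵥ (P *ᵥ v j)) := by
  classical
  set U : Submodule ℝ (EuclideanSpace ℝ (Fin d2)) := Submodule.span ℝ (F : Set _) with hU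
  set r : ℕ := Module.finrank ℝ U with hr
  have hrcard : r ≤ F.card := by
    simpa [hr, hU, Set.finrank] using finrank_span_finset_le_card (R := ℝ) F
  let b : OrthonormalBasis (Fin r) ℝ U := stdOrthonormalBasis ℝ U
  let w : Fin r → (Fin d2 → ℝ) := fun m => ((b m : U) : EuclideanSpace ℝ (Fin d2))
  have hwinner : ∀ m l, w m ⬝ᵥ w l = (if m = l then (1:ℝ) else 0) := by
    intro m l
    have := (orthonormal_iff_ite (𝕜 := ℝ)).mp b.orthonormal m l
    rw [Submodule.coe_inner] at this
    rw [dotProduct_comm]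
    simpa [PiLp.inner_apply, RCLike.inner_apply, dotProduct, w] using this
  have hspan : ∀ y : EuclideanSpace ℝ (Fin d2), y ∈ U →
      ∑ m, (w m ⬝ᵥ (y : Fin d2 → ℝ)) • w m = (y : Fin d2 → ℝ) := by
    intro y hy
    have h1 := b.sum_repr ⟨y, hy⟩
    have h2 : ∀ m, b.repr ⟨y, hy⟩ m = w m ⬝ᵥ (y : Fin d2 → ℝ) := by
      intro m
      rw [b.repr_apply_apply, Submodule.coe_inner]
      simp [PiLp.inner_apply, RCLike.inner_apply, dotProduct, w]
      exact Finset.sum_congr rfl fun _ _ => mul_comm _ _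
    have h3 := congrArg (fun z : U => (z : EuclideanSpace ℝ (Fin d2))) h1
    simp only [Submodule.coe_sum, Submodule.coe_smul] at h3
    calc ∑ m, (w m ⬝ᵥ (y : Fin d2 → ℝ)) • w m
        = ∑ m, b.repr ⟨y, hy⟩ m • w m := by
          refine Finset.sum_congr rfl fun m _ => ?_; rw [h2]
      _ = (y : Fin d2 → ℝ) := by simpa [w] using congrArg WithLp.ofLp h3
  set Q : Matrix (Fin d2) (Fin d2) ℝ := ∑ m, Matrix.vecMulVec (w m) (w m) with hQ
  have hQx : ∀ x : Fin d2 → ℝ, Q *ᵥ x = ∑ m, (w m ⬝ᵥ x) • w m := by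
    intro x
    rw [hQ, sum_matrix_mulVec]
    exact Finset.sum_congr rfl fun m _ => vecMulVec_mulVec _ _ _
  have hxQx : ∀ x : Fin d2 → ℝ, x ⬝ᵥ (Q *ᵥ x) = ∑ m, (w m ⬝ᵥ x) ^ 2 := by
    intro x
    rw [hQx, dot_sum]
    refine Finset.sum_congr rfl fun m _ => ?_
    rw [dotProduct_smul, smul_eq_mul, dotProduct_comm, sq]
  have hQQ : ∀ x : Fin d2 → ℝ, (Q *ᵥ x) ⬝ᵥ (Q *ᵥ x) = ∑ m, (w m ⬝ᵥ x) ^ 2 := by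
    intro x
    rw [hQx, sum_dot]
    have : ∀ m, ((w m ⬝ᵥ x) • w m) ⬝ᵥ (∑ l, (w l ⬝ᵥ x) • w l)
        = (w m ⬝ᵥ x) ^ 2 := by
      intro m
      rw [dot_sum]
      have : ∀ l, ((w m ⬝ᵥ x) • w m) ⬝ᵥ ((w l ⬝ᵥ x) • w l)
          = if l = m then (w m ⬝ᵥ x) ^ 2 else 0 := by
        intro l
        rw [smul_dotProduct, dotProduct_smul, hwinner m l]
        by_cases h : l = m
        · subst h; simp [sq]
        · have : ¬(m = l) := fun hh => h hh.symm
          simp [this, h]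
      rw [Finset.sum_congr rfl fun l _ => this l, Finset.sum_ite_eq' Finset.univ m]
      simp
    exact Finset.sum_congr rfl fun m _ => this m
  refine ⟨1 - Q, r, ?_, hrcard, ?_, ?_, ?_, ?_, ?_⟩
  · -- symmetry
    rw [Matrix.transpose_sub, Matrix.transpose_one, hQ, Matrix.transpose_sum]
    congr 1
    refine Finset.sum_congr rfl fun m _ => ?_
    ext i j
    simp [Matrix.transpose_apply, Matrix.vecMulVec_apply, mul_comm]
  · -- kills F
    intro y hy
    rw [Matrix.sub_mulVec, Matrix.one_mulVec, hQx,
      hspan y (Submodule.subset_span (by exact_mod_cast hy)), sub_self]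
  · -- nonneg quadratic form
    intro x
    have hP : (1 - Q) *ᵥ x = x - Q *ᵥ x := by
      rw [Matrix.sub_mulVec, Matrix.one_mulVec]
    have e1 : x ⬝ᵥ ((1 - Q) *ᵥ x) = x ⬝ᵥ x - ∑ m, (w m ⬝ᵥ x) ^ 2 := by
      rw [hP, dotProduct_sub, hxQx]
    have e2 : ((1 - Q) *ᵥ x) ⬝ᵥ ((1 - Q) *ᵥ x) = x ⬝ᵥ x - ∑ m, (w m ⬝ᵥ x) ^ 2 := by
      rw [hP, dotProduct_sub, sub_dotProduct, sub_dotProduct,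
        hxQx, hQQ]
      have := hxQx x
      rw [dotProduct_comm x (Q *ᵥ x)] at this
      rw [this]
      ring
    rw [e1, ← e2]
    exact dot_self_nonneg _
  · -- bounded by identity
    intro x
    have hP : (1 - Q) *ᵥ x = x - Q *ᵥ x := by
      rw [Matrix.sub_mulVec, Matrix.one_mulVec]
    rw [hP, dotProduct_sub, hxQx]
    have : 0 ≤ ∑ m, (w m ⬝ᵥ x) ^ 2 := Finset.sum_nonneg fun m _ => sq_nonneg _
    linarith
  · -- contraction
    intro x
    have hP : (1 - Q) *ᵥ x = x - Q *ᵥ x := by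
      rw [Matrix.sub_mulVec, Matrix.one_mulVec]
    have e2 : ((1 - Q) *ᵥ x) ⬝ᵥ ((1 - Q) *ᵥ x) = x ⬝ᵥ x - ∑ m, (w m ⬝ᵥ x) ^ 2 := by
      rw [hP, dotProduct_sub, sub_dotProduct, sub_dotProduct,
        hxQx, hQQ]
      have := hxQx x
      rw [dotProduct_comm x (Q *ᵥ x)] at this
      rw [this]
      ring
    rw [e2]
    have : 0 ≤ ∑ m, (w m ⬝ᵥ x) ^ 2 := Finset.sum_nonneg fun m _ => sq_nonneg _
    linarith
  · -- trace lower bound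
    intro v hv
    have : ∀ j, v j ⬝ᵥ ((1 - Q) *ᵥ v j) = v j ⬝ᵥ v j - ∑ m, (w m ⬝ᵥ v j) ^ 2 := by
      intro j
      rw [Matrix.sub_mulVec, Matrix.one_mulVec, dotProduct_sub, hxQx]
    rw [Finset.sum_congr rfl fun j _ => this j, Finset.sum_sub_distrib]
    have hn : ∑ j, v j ⬝ᵥ v j = (d2 : ℝ) := by
      have h1 : ∀ a : Fin d2, ∑ j, v j a * v j a = 1 := fun a => by simpa using hv a a
      calc ∑ j, v j ⬝ᵥ v j = ∑ j, ∑ a, v j a * v j a := rfl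
        _ = ∑ a, ∑ j, v j a * v j a := Finset.sum_comm
        _ = ∑ _a : Fin d2, (1:ℝ) := Finset.sum_congr rfl fun a _ => h1 a
        _ = d2 := by simp
    have hm : ∑ j, ∑ m, (w m ⬝ᵥ v j) ^ 2 = (r : ℝ) := by
      rw [Finset.sum_comm]
      have h1 : ∀ m, ∑ j, (w m ⬝ᵥ v j) ^ 2 = 1 := by
        intro m
        have hp := hv.parseval (w m) (w m)
        rw [hwinner m m, if_pos rfl] at hp
        rw [← hp]
        refine Finset.sum_congr rfl fun j _ => ?_
        rw [sq, dotProduct_comm]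
      rw [Finset.sum_congr rfl fun m _ => h1 m]
      simp
    rw [hn, hm]

/-! ### The functional `Fs` -/

noncomputable def Fs (s : ℝ) (C : Matrix (Fin d1) (Fin d2) ℝ) : ℝ :=
  ∑ j, min (singularValue C j) s

lemma vecMulVec_mul {m n : ℕ} (u : Fin m → ℝ) (v : Fin n → ℝ)
    (P : Matrix (Fin n) (Fin n) ℝ) :
    Matrix.vecMulVec u v * P = Matrix.vecMulVec u (Pᵀ *ᵥ v) := by
  ext i j
  simp only [Matrix.mul_apply, Matrix.vecMulVec_apply, Matrix.mulVec,
    dotProduct, Matrix.transpose_apply, Finset.mul_sum]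
  exact Finset.sum_congr rfl fun a _ => by ring

lemma vecMulVec_zero_right {m n : ℕ} (u : Fin m → ℝ) :
    Matrix.vecMulVec u (0 : Fin n → ℝ) = 0 := by
  ext i j; simp [Matrix.vecMulVec_apply]

lemma exists_split (C : Matrix (Fin d1) (Fin d2) ℝ) (s : ℝ) (hs : 0 ≤ s) :
    ∃ (X : Matrix (Fin d1) (Fin d2) ℝ) (F : Finset (EuclideanSpace ℝ (Fin d2))),
      ((F.card : ℝ) * s + traceNorm X ≤ Fs s C) ∧
      (∀ P : Matrix (Fin d2) (Fin d2) ℝ, Pᵀ = P →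
        (∀ y ∈ F, P *ᵥ (y : Fin d2 → ℝ) = 0) → (C - X) * P = 0) := by
  classical
  set S := svd C with hS
  set T : Finset (Fin d2) := Finset.univ.filter fun j => s < singularValue C j with hT
  set Y : Matrix (Fin d1) (Fin d2) ℝ :=
    ∑ k ∈ T, singularValue C k • Matrix.vecMulVec (S.u k) (S.v k) with hY
  set X : Matrix (Fin d1) (Fin d2) ℝ := C - Y with hX
  set F : Finset (EuclideanSpace ℝ (Fin d2)) :=
    T.image fun k => (WithLp.toLp 2 (S.v k) : EuclideanSpace ℝ (Fin d2)) with hF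
  have hmemT : ∀ j, j ∈ T ↔ s < singularValue C j := by
    intro j; simp [hT]
  have hXv : ∀ j, X *ᵥ S.v j =
      (if j ∈ T then 0 else singularValue C j • S.u j) := by
    intro j
    have hYv : Y *ᵥ S.v j = (if j ∈ T then singularValue C j • S.u j else 0) := by
      rw [hY, sum_matrix_mulVec]
      have : ∀ k, (singularValue C k • Matrix.vecMulVec (S.u k) (S.v k)) *ᵥ S.v j
          = (if k = j then singularValue C j • S.u j else 0) := by
        intro k
        rw [Matrix.smul_mulVec, vecMulVec_mulVec, S.hv k j]
        by_cases h : k = j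
        · subst h; simp
        · simp [h]
      rw [Finset.sum_congr rfl fun k _ => this k, Finset.sum_ite_eq' T j]
    rw [hX, Matrix.sub_mulVec, hYv, S.hCv]
    by_cases h : j ∈ T <;> simp [h]
  have htnX : traceNorm X ≤ ∑ j ∈ Finset.univ.filter (fun j => ¬ s < singularValue C j),
      singularValue C j := by
    have SX := svd X
    rw [← SX.frob_polar, S.hres.frob_expand]
    rw [Finset.sum_filter]
    refine Finset.sum_le_sum fun j _ => ?_
    rw [hXv j]
    by_cases h : j ∈ T
    · rw [if_pos h, if_neg (by rw [hmemT] at h; exact not_not_intro h)]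
      simp
    · rw [if_neg h, if_pos (by rw [hmemT] at h; exact h)]
      rw [dotProduct_smul, smul_eq_mul]
      by_cases hσ : singularValue C j = 0
      · simp [hσ]
      · have h1 : (SX.polar *ᵥ S.v j) ⬝ᵥ (SX.polar *ᵥ S.v j) ≤ 1 := by
          have := SX.polar_contra (S.v j)
          rwa [S.hv j j, if_pos rfl] at this
        have h2 : S.u j ⬝ᵥ S.u j ≤ 1 := by
          rw [S.hu j j]
          by_cases h3 : singularValue C j ≠ 0 <;> simp [h3]
        have h3 := dot_le_one h1 h2
        calc singularValue C j * ((SX.polar *ᵥ S.v j) ⬝ᵥ S.u j)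
            ≤ singularValue C j * 1 :=
              mul_le_mul_of_nonneg_left h3 (singularValue_nonneg C j)
          _ = singularValue C j := mul_one _
  have hFs : Fs s C = (T.card : ℝ) * s +
      ∑ j ∈ Finset.univ.filter (fun j => ¬ s < singularValue C j), singularValue C j := by
    rw [Fs, ← Finset.sum_filter_add_sum_filter_not Finset.univ
      (fun j => s < singularValue C j) (fun j => min (singularValue C j) s)]
    congr 1
    · rw [Finset.sum_congr rfl (fun j hj => ?_), Finset.sum_const, nsmul_eq_mul]
      rw [min_eq_right (le_of_lt (by simpa using (Finset.mem_filter.mp hj).2))]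
    · refine Finset.sum_congr rfl fun j hj => ?_
      have := (Finset.mem_filter.mp hj).2
      rw [min_eq_left (le_of_not_gt this)]
  refine ⟨X, F, ?_, ?_⟩
  · have hcard : (F.card : ℝ) ≤ T.card := by exact_mod_cast Finset.card_image_le
    have := mul_le_mul_of_nonneg_right hcard hs
    rw [hFs]
    linarith [htnX]
  · intro P hPsymm hPkill
    have hCX : C - X = Y := by rw [hX]; abel
    rw [hCX, hY, Matrix.sum_mul]
    refine Finset.sum_eq_zero fun k hk => ?_
    rw [Matrix.smul_mul, vecMulVec_mul, hPsymm]
    have : P *ᵥ S.v k = 0 :=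
      hPkill (WithLp.toLp 2 (S.v k) : EuclideanSpace ℝ (Fin d2)) (Finset.mem_image_of_mem _ hk)
    rw [this, vecMulVec_zero_right, smul_zero]

theorem Fs_subadd (s : ℝ) (hs : 0 ≤ s) (A B : Matrix (Fin d1) (Fin d2) ℝ) :
    Fs s (A + B) ≤ Fs s A + Fs s B := by
  classical
  obtain ⟨XA, FA, hA1, hA2⟩ := exists_split A s hs
  obtain ⟨XB, FB, hB1, hB2⟩ := exists_split B s hs
  obtain ⟨P, r, hPsymm, hrF, hPkill, hPpos, hPle, hPcontra, hPtrace⟩ :=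
    exists_proj (FA ∪ FB)
  set SC := svd (A + B) with hSC
  set t : Fin d2 → ℝ := fun j => SC.v j ⬝ᵥ (P *ᵥ SC.v j) with ht
  have ht0 : ∀ j, 0 ≤ t j := fun j => hPpos _
  have ht1 : ∀ j, t j ≤ 1 := by
    intro j
    have h := hPle (SC.v j)
    rw [SC.hv j j, if_pos rfl] at h
    exact h
  have hfrob : frob SC.polar ((A + B) * P) = ∑ j, singularValue (A + B) j * t j := by
    rw [SC.hres.frob_expand]
    refine Finset.sum_congr rfl fun j _ => ?_
    rw [SC.polar_mulVec_v, ← Matrix.mulVec_mulVec, dot_mulVec_left, SC.hCtu,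
      smul_dotProduct, smul_eq_mul]
  have hYA : (A - XA) * P = 0 :=
    hA2 P hPsymm (fun y hy => hPkill y (Finset.mem_union_left _ hy))
  have hYB : (B - XB) * P = 0 :=
    hB2 P hPsymm (fun y hy => hPkill y (Finset.mem_union_right _ hy))
  have hsplitP : (A + B) * P = XA * P + XB * P := by
    have e : A + B = (A - XA) + (B - XB) + (XA + XB) := by abel
    rw [e, Matrix.add_mul, Matrix.add_mul, hYA, hYB, Matrix.add_mul]
    simp
  have hbound : ∑ j, singularValue (A + B) j * t j ≤ traceNorm XA + traceNorm XB := by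
    rw [← hfrob]
    have hPTcontra : Contra Pᵀ := by rw [hPsymm]; exact hPcontra
    calc frob SC.polar ((A + B) * P) ≤ traceNorm ((A + B) * P) :=
          frob_le_traceNorm SC.polar_contra
      _ = traceNorm (XA * P + XB * P) := by rw [hsplitP]
      _ ≤ traceNorm (XA * P) + traceNorm (XB * P) := traceNorm_triangle _ _
      _ ≤ traceNorm XA + traceNorm XB :=
          add_le_add (traceNorm_mul_le _ _ hPTcontra) (traceNorm_mul_le _ _ hPTcontra)
  have htr : ∑ j, (1 - t j) ≤ (r : ℝ) := by
    have h := hPtrace SC.v SC.hres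
    rw [Finset.sum_sub_distrib]
    simp only [Finset.sum_const, Finset.card_univ, Fintype.card_fin, nsmul_eq_mul, mul_one]
    linarith
  have hmain : Fs s (A + B) ≤ (∑ j, singularValue (A + B) j * t j) +
      s * ∑ j, (1 - t j) := by
    rw [Fs, Finset.mul_sum, ← Finset.sum_add_distrib]
    refine Finset.sum_le_sum fun j _ => ?_
    have h1 : min (singularValue (A + B) j) s * t j ≤ singularValue (A + B) j * t j :=
      mul_le_mul_of_nonneg_right (min_le_left _ _) (ht0 j)
    have h2 : min (singularValue (A + B) j) s * (1 - t j) ≤ s * (1 - t j) :=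
      mul_le_mul_of_nonneg_right (min_le_right _ _) (by linarith [ht1 j])
    calc min (singularValue (A + B) j) s
        = min (singularValue (A + B) j) s * t j
          + min (singularValue (A + B) j) s * (1 - t j) := by ring
      _ ≤ singularValue (A + B) j * t j + s * (1 - t j) := add_le_add h1 h2
  have hr' : (r : ℝ) ≤ (FA.card : ℝ) + (FB.card : ℝ) := by
    have h2 := Finset.card_union_le FA FB
    exact_mod_cast le_trans hrF h2
  have hsr : s * ∑ j, (1 - t j) ≤ s * ((FA.card : ℝ) + (FB.card : ℝ)) :=
    mul_le_mul_of_nonneg_left (le_trans htr hr') hs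
  have hA1' := hA1
  have hB1' := hB1
  nlinarith [hmain, hbound, hsr, hA1', hB1']

/-! ### Representation of concave functions on finite positive sets -/

lemma rep_concave (S : Finset ℝ) : ∀ (f : ℝ → ℝ),
    (∀ x ∈ S, (0:ℝ) < x) → f 0 = 0 →
    (∀ x y z : ℝ, x ∈ insert (0:ℝ) S → y ∈ insert (0:ℝ) S → z ∈ insert (0:ℝ) S →
      x < y → y < z → (f z - f y) / (z - y) ≤ (f y - f x) / (y - x)) →
    (∀ x y : ℝ, x ∈ insert (0:ℝ) S → y ∈ insert (0:ℝ) S → x < y →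
      0 ≤ (f y - f x) / (y - x)) →
    ∃ a : ℝ → ℝ, (∀ u ∈ S, 0 ≤ a u) ∧
      ∀ x ∈ insert (0:ℝ) S, f x = ∑ u ∈ S, a u * min x u := by
  classical
  induction S using Finset.strongInduction with
  | _ S IH =>
    intro f hpos hf0 hslope hmono
    rcases S.eq_empty_or_nonempty with hSe | hSne
    · subst hSe
      refine ⟨fun _ => 0, by simp, ?_⟩
      intro x hx
      simp only [Finset.mem_insert, Finset.notMem_empty, or_false] at hx
      simp [hx, hf0]
    · set tstar := S.max' hSne with htstar
      have htS : tstar ∈ S := S.max'_mem hSne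
      set S' := S.erase tstar with hS'
      have hSS : S' ⊂ S := Finset.erase_ssubset htS
      set t' : ℝ := if h : S'.Nonempty then S'.max' h else 0 with ht'
      have ht'mem : t' ∈ insert (0:ℝ) S := by
        rw [ht']
        split
        · exact Finset.mem_insert_of_mem (Finset.mem_of_mem_erase (S'.max'_mem _))
        · exact Finset.mem_insert_self _ _
      have ht'lt : t' < tstar := by
        rw [ht']
        split
        · rename_i h
          have h1 : S'.max' h ∈ S' := S'.max'_mem h
          have h2 : S'.max' h ≠ tstar := Finset.ne_of_mem_erase h1
          exact lt_of_le_of_ne (S.le_max' _ (Finset.mem_of_mem_erase h1)) h2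
        · exact hpos tstar htS
      have hle' : ∀ x ∈ insert (0:ℝ) S', x ≤ t' := by
        intro x hx
        rcases Finset.mem_insert.mp hx with h | h
        · subst h
          rw [ht']; split
          · rename_i hne
            exact le_of_lt (hpos _ (Finset.mem_of_mem_erase (S'.max'_mem hne)))
          · exact le_refl 0
        · rw [ht']
          have hne : S'.Nonempty := ⟨x, h⟩
          rw [dif_pos hne]
          exact S'.le_max' x h
      set c : ℝ := (f tstar - f t') / (tstar - t') with hc
      have hsub : insert (0:ℝ) S' ⊆ insert (0:ℝ) S := by
        intro x hx
        rcases Finset.mem_insert.mp hx with h | h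
        · exact h ▸ Finset.mem_insert_self _ _
        · exact Finset.mem_insert_of_mem (Finset.mem_of_mem_erase h)
      have hc0 : 0 ≤ c := hmono t' tstar ht'mem (Finset.mem_insert_of_mem htS) ht'lt
      have hslopege : ∀ x y, x ∈ insert (0:ℝ) S' → y ∈ insert (0:ℝ) S' → x < y →
          c ≤ (f y - f x) / (y - x) := by
        intro x y hx hy hxy
        rcases eq_or_lt_of_le (hle' y hy) with h | h
        · have hyt : y < tstar := by rw [h]; exact ht'lt
          have hthis := hslope x y tstar (hsub hx) (hsub hy)
            (Finset.mem_insert_of_mem htS) hxy hyt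
          rw [hc, ← h]
          exact hthis
        · calc c ≤ (f t' - f y) / (t' - y) :=
              hslope y t' tstar (hsub hy) ht'mem (Finset.mem_insert_of_mem htS) h ht'lt
            _ ≤ (f y - f x) / (y - x) := hslope x y t' (hsub hx) (hsub hy) ht'mem hxy h
      set g : ℝ → ℝ := fun x => f x - c * x with hg
      have hgslope : ∀ x y : ℝ, x < y →
          (g y - g x) / (y - x) = (f y - f x) / (y - x) - c := by
        intro x y hxy
        have hne : y - x ≠ 0 := ne_of_gt (by linarith)
        field_simp [hg]
        ring
      obtain ⟨a', ha'0, ha'⟩ := IH S' hSS g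
        (fun x hx => hpos x (Finset.mem_of_mem_erase hx))
        (by simp [hg, hf0])
        (by
          intro x y z hx hy hz hxy hyz
          rw [hgslope x y hxy, hgslope y z hyz]
          have := hslope x y z (hsub hx) (hsub hy) (hsub hz) hxy hyz
          linarith)
        (by
          intro x y hx hy hxy
          rw [hgslope x y hxy]
          have := hslopege x y hx hy hxy
          linarith)
      set aa : ℝ → ℝ := fun u => if u = tstar then c else a' u with haa
      have haat : aa tstar = c := by rw [haa]; simp
      have haan : ∀ u, u ≠ tstar → aa u = a' u := by
        intro u hu; rw [haa]; simp [hu]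
      refine ⟨aa, ?_, ?_⟩
      · intro u hu
        by_cases h : u = tstar
        · rw [h, haat]; exact hc0
        · rw [haan u h]
          exact ha'0 u (Finset.mem_erase.mpr ⟨h, hu⟩)
      · intro x hx
        have hins : S = insert tstar S' := (Finset.insert_erase htS).symm
        have htno : tstar ∉ S' := Finset.notMem_erase _ _
        have hsum' : ∀ z : ℝ, ∑ u ∈ S', aa u * min z u
            = ∑ u ∈ S', a' u * min z u := by
          intro z
          refine Finset.sum_congr rfl fun u hu => ?_
          rw [haan u (Finset.ne_of_mem_erase hu)]
        rw [hins, Finset.sum_insert htno, hsum', haat]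
        have hcase : x = tstar ∨ x ∈ insert (0:ℝ) S' := by
          rcases Finset.mem_insert.mp hx with h | h
          · exact Or.inr (h ▸ Finset.mem_insert_self _ _)
          · rw [hins] at h
            rcases Finset.mem_insert.mp h with h | h
            · exact Or.inl h
            · exact Or.inr (Finset.mem_insert_of_mem h)
        rcases hcase with h | h
        · subst h
          have hmin : min tstar tstar = tstar := min_self _
          have hsum2 : ∑ u ∈ S', a' u * min tstar u = ∑ u ∈ S', a' u * min t' u := by
            refine Finset.sum_congr rfl fun u hu => ?_
            have hu' : u ≤ t' := hle' u (Finset.mem_insert_of_mem hu)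
            rw [min_eq_right (le_of_lt (lt_of_le_of_lt hu' ht'lt)), min_eq_right hu']
          have hgt' := ha' t' ?side
          case side =>
            rw [ht']; split
            · exact Finset.mem_insert_of_mem (S'.max'_mem _)
            · exact Finset.mem_insert_self _ _
          rw [hmin, hsum2, ← hgt']
          have hne : tstar - t' ≠ 0 := ne_of_gt (by linarith)
          have : c * (tstar - t') = f tstar - f t' := by
            rw [hc, div_mul_cancel₀ _ hne]
          simp only [hg]
          linarith [this]
        · have hxle : x ≤ t' := hle' x h
          rw [min_eq_left (le_of_lt (lt_of_le_of_lt hxle ht'lt)), ← ha' x h]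
          simp only [hg]
          ring

end RotfeldAux

/-- if `p_λ : ℝ₊ → ℝ₊` is concave, nondecreasing, `p_λ 0 = 0` and
`p_λ(t)/t` nonincreasing for `t > 0`, then the spectral regularizer satisfies
`𝒫_λ(Θ + Θ') ≤ 𝒫_λ(Θ) + 𝒫_λ(Θ')` and `𝒫_λ(Θ - Θ') ≥ 𝒫_λ(Θ) - 𝒫_λ(Θ')`. -/
theorem specReg_triangle {d1 d2 : ℕ} (p : ℝ → ℝ)
    (hconc : ConcaveOn ℝ (Set.Ici 0) p) (hmono : MonotoneOn p (Set.Ici 0))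
    (h0 : p 0 = 0) (hnn : ∀ t : ℝ, 0 ≤ t → 0 ≤ p t)
    (hratio : ∀ s t : ℝ, 0 < s → s ≤ t → p t / t ≤ p s / s)
    (A B : Matrix (Fin d1) (Fin d2) ℝ) :
    specReg p (A + B) ≤ specReg p A + specReg p B ∧
      specReg p (A - B) ≥ specReg p A - specReg p B := by
  classical
  have key : ∀ X Y : Matrix (Fin d1) (Fin d2) ℝ,
      specReg p (X + Y) ≤ specReg p X + specReg p Y := by
    intro X Y
    set pts : Finset ℝ :=
      ((Finset.univ.image (singularValue (X + Y)) ∪ Finset.univ.image (singularValue X))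
        ∪ Finset.univ.image (singularValue Y)).filter (fun x => 0 < x) with hpts
    have hptspos : ∀ x ∈ pts, (0:ℝ) < x := fun x hx => (Finset.mem_filter.mp hx).2
    have hmem0 : ∀ x ∈ insert (0:ℝ) pts, (0:ℝ) ≤ x := by
      intro x hx
      rcases Finset.mem_insert.mp hx with h | h
      · exact le_of_eq h.symm
      · exact le_of_lt (hptspos x h)
    have hslope : ∀ x y z : ℝ, x ∈ insert (0:ℝ) pts → y ∈ insert (0:ℝ) pts →
        z ∈ insert (0:ℝ) pts → x < y → y < z →
        (p z - p y) / (z - y) ≤ (p y - p x) / (y - x) := by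
      intro x y z hx _ hz hxy hyz
      exact hconc.slope_anti_adjacent (hmem0 x hx) (hmem0 z hz) hxy hyz
    have hmono' : ∀ x y : ℝ, x ∈ insert (0:ℝ) pts → y ∈ insert (0:ℝ) pts → x < y →
        0 ≤ (p y - p x) / (y - x) := by
      intro x y hx hy hxy
      apply div_nonneg _ (by linarith)
      have := hmono (hmem0 x hx) (hmem0 y hy) (le_of_lt hxy)
      linarith
    obtain ⟨a, ha0, ha⟩ := RotfeldAux.rep_concave pts p hptspos h0 hslope hmono'
    have hsvmem : ∀ (C : Matrix (Fin d1) (Fin d2) ℝ),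
        (Finset.univ.image (singularValue C) ⊆
          ((Finset.univ.image (singularValue (X + Y)) ∪ Finset.univ.image (singularValue X))
            ∪ Finset.univ.image (singularValue Y))) →
        ∀ j, singularValue C j ∈ insert (0:ℝ) pts := by
      intro C hsub j
      by_cases h : 0 < singularValue C j
      · refine Finset.mem_insert_of_mem ?_
        rw [hpts, Finset.mem_filter]
        exact ⟨hsub (Finset.mem_image_of_mem _ (Finset.mem_univ j)), h⟩
      · have : singularValue C j = 0 :=
          le_antisymm (le_of_not_gt h) (RotfeldAux.singularValue_nonneg C j)
        rw [this]
        exact Finset.mem_insert_self _ _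
    have hexp : ∀ (C : Matrix (Fin d1) (Fin d2) ℝ),
        (∀ j, singularValue C j ∈ insert (0:ℝ) pts) →
        specReg p C = ∑ u ∈ pts, a u * RotfeldAux.Fs u C := by
      intro C hC
      rw [specReg]
      calc ∑ j, p (singularValue C j)
          = ∑ j, ∑ u ∈ pts, a u * min (singularValue C j) u :=
            Finset.sum_congr rfl fun j _ => ha _ (hC j)
        _ = ∑ u ∈ pts, ∑ j, a u * min (singularValue C j) u := Finset.sum_comm
        _ = ∑ u ∈ pts, a u * RotfeldAux.Fs u C := by
            refine Finset.sum_congr rfl fun u _ => ?_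
            rw [RotfeldAux.Fs, Finset.mul_sum]
    have h1 := hexp (X + Y) (hsvmem _ (fun z hz =>
      Finset.mem_union_left _ (Finset.mem_union_left _ hz)))
    have h2 := hexp X (hsvmem _ (fun z hz =>
      Finset.mem_union_left _ (Finset.mem_union_right _ hz)))
    have h3 := hexp Y (hsvmem _ (fun z hz => Finset.mem_union_right _ hz))
    rw [h1, h2, h3, ← Finset.sum_add_distrib]
    refine Finset.sum_le_sum fun u hu => ?_
    rw [← mul_add]
    exact mul_le_mul_of_nonneg_left
      (RotfeldAux.Fs_subadd u (le_of_lt (hptspos u hu)) X Y) (ha0 u hu)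
  constructor
  · exact key A B
  · have h2 := key (A - B) B
    have e : (A - B) + B = A := by abel
    rw [e] at h2
    linarith
end

section
/- Let $\Theta^*\in\mathbb{R}^{d_1\times d_2}$ have rank $r$ and let $\Delta\in\mathbb{R}^{d_1\times d_2}$ be arbitrary. Then there exists a decomposition $\Delta=\Delta'+\Delta''$ such that $\mathrm{rank}(\Delta')\le 2r$, the row space of $\Delta''$ is orthogonal to the row space of $\Theta^*$, and the column space of $\Delta''$ is orthogonal to the column space of $\Theta^*$. -/
open Matrix RealInnerProductSpace

lemma aux_rank_add_le {m n : Type*} [Fintype n] [Fintype m] (A B : Matrix m n ℝ) :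
    (A + B).rank ≤ A.rank + B.rank := by
  classical
  rw [Matrix.rank, Matrix.rank, Matrix.rank]
  have h : LinearMap.range (A + B).mulVecLin ≤
      LinearMap.range A.mulVecLin ⊔ LinearMap.range B.mulVecLin := by
    rintro x ⟨y, rfl⟩
    rw [Matrix.mulVecLin_add]
    exact Submodule.mem_sup.mpr ⟨A.mulVecLin y, ⟨y, rfl⟩, B.mulVecLin y, ⟨y, rfl⟩, rfl⟩
  refine (Submodule.finrank_mono h).trans ?_
  have := Submodule.finrank_sup_add_finrank_inf_eq
    (LinearMap.range A.mulVecLin) (LinearMap.range B.mulVecLin)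
  omega

lemma aux_exists_sym_proj {m n : ℕ} (A : Matrix (Fin m) (Fin n) ℝ) :
    ∃ P : Matrix (Fin m) (Fin m) ℝ, Pᵀ = P ∧ P * A = A ∧ P.rank ≤ A.rank := by
  classical
  let e := WithLp.linearEquiv 2 ℝ (Fin m → ℝ)
  let S : Submodule ℝ (EuclideanSpace ℝ (Fin m)) :=
    (LinearMap.range A.mulVecLin).comap e.toLinearMap
  let g := S.starProjection
  let f : (Fin m → ℝ) →ₗ[ℝ] (Fin m → ℝ) :=
    e.toLinearMap ∘ₗ g.toLinearMap ∘ₗ e.symm.toLinearMap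
  let P : Matrix (Fin m) (Fin m) ℝ := LinearMap.toMatrix' f
  have hPv : ∀ v : Fin m → ℝ, P.mulVec v = f v := by
    intro v
    rw [← Matrix.toLin'_apply, Matrix.toLin'_toMatrix']
  have hfix : ∀ x : Fin m → ℝ, x ∈ LinearMap.range A.mulVecLin → f x = x := by
    intro x hx
    have hm : e.symm x ∈ S := by
      show e (e.symm x) ∈ LinearMap.range A.mulVecLin
      simpa using hx
    show e (g (e.symm x)) = x
    rw [show g (e.symm x) = e.symm x from Submodule.starProjection_eq_self_iff.mpr hm]
    simp
  refine ⟨P, ?_, ?_, ?_⟩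
  · -- symmetry
    ext i j
    have key : ∀ i j : Fin m, g (EuclideanSpace.single j 1) i = g (EuclideanSpace.single i 1) j := by
      intro i j
      calc g (EuclideanSpace.single j 1) i
          = ⟪(EuclideanSpace.single i 1 : EuclideanSpace ℝ (Fin m)),
              g (EuclideanSpace.single j 1)⟫ := by
            rw [EuclideanSpace.inner_single_left]; simp
        _ = ⟪g (EuclideanSpace.single i 1),
              (EuclideanSpace.single j 1 : EuclideanSpace ℝ (Fin m))⟫ :=
            (S.inner_starProjection_left_eq_right _ _).symm
        _ = ⟪(EuclideanSpace.single j 1 : EuclideanSpace ℝ (Fin m)),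
              g (EuclideanSpace.single i 1)⟫ := real_inner_comm _ _
        _ = g (EuclideanSpace.single i 1) j := by
            rw [EuclideanSpace.inner_single_left]; simp
    rw [Matrix.transpose_apply]
    exact key j i
  · -- P * A = A
    ext i j
    have hcolmem : (fun i => A i j) ∈ LinearMap.range A.mulVecLin := by
      refine ⟨Pi.single j 1, ?_⟩
      show A.mulVec (Pi.single j 1) = _
      rw [Matrix.mulVec_single_one]
      rfl
    have := congrFun (hPv (fun i => A i j)) i
    rw [hfix _ hcolmem] at this
    simpa [Matrix.mul_apply, Matrix.mulVec, dotProduct] using this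
  · -- rank
    rw [Matrix.rank, Matrix.rank]
    have hPlin : P.mulVecLin = f := by
      apply LinearMap.ext
      intro v
      rw [Matrix.mulVecLin_apply]
      exact hPv v
    rw [hPlin]
    have hrange : LinearMap.range f ≤ LinearMap.range A.mulVecLin := by
      rintro x ⟨y, rfl⟩
      exact S.starProjection_apply_mem _
    exact Submodule.finrank_mono hrange

/-- Recht–Fazel–Parrilo decomposition: if `rank Θ* = r`, then any `Δ`
decomposes as `Δ = Δ' + Δ''` with `rank Δ' ≤ 2r`, the row space of `Δ''` orthogonal
to that of `Θ*` (`Δ'' * Θ*ᵀ = 0`), and the column space of `Δ''` orthogonal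
to that of `Θ*` (`Δ''ᵀ * Θ* = 0`). -/
theorem matrix_decomposition_lemma {d1 d2 r : ℕ}
    (Θs Δ : Matrix (Fin d1) (Fin d2) ℝ) (hr : Θs.rank = r) :
    ∃ Δ' Δ'' : Matrix (Fin d1) (Fin d2) ℝ,
      Δ = Δ' + Δ'' ∧ Δ'.rank ≤ 2 * r ∧ Δ'' * Θsᵀ = 0 ∧ Δ''ᵀ * Θs = 0 := by
  obtain ⟨P, hPsym, hPA, hPrank⟩ := aux_exists_sym_proj Θs
  obtain ⟨Q, hQsym, hQA, hQrank⟩ := aux_exists_sym_proj Θsᵀ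
  refine ⟨P * Δ + (1 - P) * Δ * Q, (1 - P) * Δ * (1 - Q), ?_, ?_, ?_, ?_⟩
  · simp only [Matrix.sub_mul, Matrix.mul_sub, Matrix.one_mul, Matrix.mul_one]
    abel
  · refine (aux_rank_add_le _ _).trans ?_
    have h1 : (P * Δ).rank ≤ r := hr ▸ (Matrix.rank_mul_le_left P Δ).trans hPrank
    have hQr : Q.rank ≤ r := by
      rw [← hr, ← Matrix.rank_transpose Θs]; exact hQrank
    have h2 : ((1 - P) * Δ * Q).rank ≤ r :=
      (Matrix.rank_mul_le_right _ Q).trans hQr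
    omega
  · have : (1 - Q) * Θsᵀ = 0 := by rw [Matrix.sub_mul, Matrix.one_mul, hQA, sub_self]
    rw [Matrix.mul_assoc, this, Matrix.mul_zero]
  · have hP0 : (1 - P) * Θs = 0 := by rw [Matrix.sub_mul, Matrix.one_mul, hPA, sub_self]
    simp only [Matrix.transpose_mul, Matrix.transpose_sub, Matrix.transpose_one,
      hPsym, hQsym]
    rw [Matrix.mul_assoc, Matrix.mul_assoc, hP0, Matrix.mul_zero, Matrix.mul_zero]
end
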